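/- arXiv:1808.06100 — 6 statements merged into one kernel-verified Lean document; each statement's English description precedes it below -/
import Mathlib

section
/- (Frank–Wolfe type theorem) Let K ⊆ ℝ^n be a nonempty closed set and f : ℝ^n → ℝ a polynomial of degree d ≥ 1. If the problem OP(K,f) is regular (i.e., Sol(K∞, f_d) is bounded) and f is bounded from below on K, then f is coercive on K (f(x) → +∞ as x ∈ K, ‖x‖ → +∞) and consequently the solution set Sol(K,f) is nonempty and compact. -/
open Filter Topology MvPolynomial Bornology
open scoped RealInnerProductSpace Pointwise

noncomputable section

/-- `ℝ^n` as Euclidean space. -/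
abbrev En (n : ℕ) := EuclideanSpace ℝ (Fin n)

/-- Evaluation of a multivariate polynomial at a point of `ℝ^n`. -/
def evalP {n : ℕ} (f : MvPolynomial (Fin n) ℝ) (x : En n) : ℝ :=
  MvPolynomial.eval (fun i => x i) f

/-- `Sol(C,g)`: the set of global minimizers of `g` on `C`. -/
def solSet {n : ℕ} (C : Set (En n)) (g : En n → ℝ) : Set (En n) :=
  {x ∈ C | ∀ y ∈ C, g x ≤ g y}

/-- `K∞`: the asymptotic cone of `K`. -/
def asympCone {n : ℕ} (K : Set (En n)) : Set (En n) :=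
  {v | ∃ (t : ℕ → ℝ) (x : ℕ → En n), (∀ k, x k ∈ K) ∧
    Tendsto t atTop atTop ∧ Tendsto (fun k => (t k)⁻¹ • x k) atTop (𝓝 v)}

/-- The gradient `∇f` of a polynomial, via its partial derivatives. -/
def polyGrad {n : ℕ} (f : MvPolynomial (Fin n) ℝ) (x : En n) : En n :=
  WithLp.toLp 2 (fun i => MvPolynomial.eval (fun j => x j) (MvPolynomial.pderiv i f))

/-- The `ℓ2`-norm of the coefficient vector of a polynomial. -/
def l2Norm {n : ℕ} (p : MvPolynomial (Fin n) ℝ) : ℝ :=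
  Real.sqrt (∑ m ∈ p.support, (MvPolynomial.coeff m p) ^ 2)

/-- `S` is generic (residual) in `X`: it contains a countable intersection of sets, each of
which is open and dense in `X` (with respect to the `ℓ2` coefficient metric). -/
def IsGenericIn {n : ℕ} (X S : Set (MvPolynomial (Fin n) ℝ)) : Prop :=
  ∃ D : ℕ → Set (MvPolynomial (Fin n) ℝ),
    (∀ k, D k ⊆ X ∧
      (∀ g ∈ D k, ∃ ε > 0, ∀ g' ∈ X, l2Norm (g' - g) < ε → g' ∈ D k) ∧
      (∀ g ∈ X, ∀ ε > 0, ∃ g' ∈ D k, l2Norm (g' - g) < ε)) ∧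
    X ∩ (⋂ k, D k) ⊆ S

private lemma evalP_cont {n : ℕ} (p : MvPolynomial (Fin n) ℝ) : Continuous (evalP p) := by
  have h : Continuous fun x : En n => (fun i => x i : Fin n → ℝ) :=
    continuous_pi fun i => (continuous_apply i).comp (PiLp.continuous_ofLp 2 _)
  exact (MvPolynomial.continuous_eval (p := p)).comp h

private lemma evalP_smul {n j : ℕ} {p : MvPolynomial (Fin n) ℝ} (hp : p.IsHomogeneous j)
    (c : ℝ) (x : En n) : evalP p (c • x) = c ^ j * evalP p x := by
  unfold evalP
  have hcx : (fun i => (c • x) i) = c • (fun i => x i : Fin n → ℝ) := rfl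
  rw [hcx, MvPolynomial.eval_eq, MvPolynomial.eval_eq, Finset.mul_sum]
  refine Finset.sum_congr rfl fun m hm => ?_
  have hdeg : m.degree = j := by
    rw [Finsupp.degree_eq_weight_one]; exact hp (MvPolynomial.mem_support_iff.mp hm)
  have hprod : ∏ i ∈ m.support, (c • (fun i => x i : Fin n → ℝ)) i ^ m i
      = c ^ j * ∏ i ∈ m.support, x i ^ m i := by
    calc ∏ i ∈ m.support, (c • (fun i => x i : Fin n → ℝ)) i ^ m i
        = ∏ i ∈ m.support, (c ^ m i * x i ^ m i) := by
          refine Finset.prod_congr rfl fun i _ => ?_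
          simp [mul_pow]
      _ = (∏ i ∈ m.support, c ^ m i) * ∏ i ∈ m.support, x i ^ m i :=
          Finset.prod_mul_distrib
      _ = c ^ (∑ i ∈ m.support, m i) * ∏ i ∈ m.support, x i ^ m i := by
          rw [Finset.prod_pow_eq_pow_sum]
      _ = _ := by rw [show ∑ i ∈ m.support, m i = m.degree from rfl, hdeg]
  rw [hprod]; ring


private lemma tendsto_scaled {n d : ℕ} (hd : 1 ≤ d) (f : MvPolynomial (Fin n) ℝ)
    (hdeg : f.totalDegree = d) (t : ℕ → ℝ) (y : ℕ → En n) (w : En n)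
    (ht : Tendsto t atTop atTop)
    (hy : Tendsto (fun k => (t k)⁻¹ • y k) atTop (𝓝 w)) :
    Tendsto (fun k => ((t k) ^ d)⁻¹ * evalP f (y k)) atTop
      (𝓝 (evalP (homogeneousComponent d f) w)) := by
  set u : ℕ → En n := fun k => (t k)⁻¹ • y k with hu
  have hgcont : ∀ j : ℕ, Continuous (evalP (homogeneousComponent j f)) :=
    fun j => evalP_cont _
  have hsum : ∀ x : En n,
      evalP f x = ∑ j ∈ Finset.range (d + 1), evalP (homogeneousComponent j f) x := by
    intro x
    conv_lhs => rw [← MvPolynomial.sum_homogeneousComponent f]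
    rw [hdeg]
    simp [evalP]
  have htpos : ∀ᶠ k in atTop, 0 < t k := ht.eventually_gt_atTop 0
  have heq : (fun k => ((t k) ^ d)⁻¹ * evalP f (y k)) =ᶠ[atTop]
      fun k => evalP (homogeneousComponent d f) (u k) +
        ∑ j ∈ Finset.range d, ((t k) ^ (d - j))⁻¹ * evalP (homogeneousComponent j f) (u k) := by
    filter_upwards [htpos] with k hk
    have hk' : t k ≠ 0 := ne_of_gt hk
    have hyk : y k = t k • u k := by
      rw [hu]; simp [smul_smul, mul_inv_cancel₀ hk']
    rw [hyk, hsum, Finset.mul_sum, Finset.sum_range_succ]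
    have hterm : ∀ j ∈ Finset.range d,
        ((t k) ^ d)⁻¹ * evalP (homogeneousComponent j f) (t k • u k)
          = ((t k) ^ (d - j))⁻¹ * evalP (homogeneousComponent j f) (u k) := by
      intro j hj
      rw [Finset.mem_range] at hj
      rw [evalP_smul (homogeneousComponent_isHomogeneous j f)]
      have hpow : (t k) ^ d = (t k) ^ (d - j) * (t k) ^ j := by
        rw [← pow_add, Nat.sub_add_cancel hj.le]
      rw [hpow, mul_inv]
      field_simp
    rw [Finset.sum_congr rfl hterm,
      evalP_smul (homogeneousComponent_isHomogeneous d f)]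
    rw [← mul_assoc, inv_mul_cancel₀ (pow_ne_zero d hk'), one_mul]
    ring
  have hlim : Tendsto
      (fun k => evalP (homogeneousComponent d f) (u k) +
        ∑ j ∈ Finset.range d, ((t k) ^ (d - j))⁻¹ * evalP (homogeneousComponent j f) (u k))
      atTop (𝓝 (evalP (homogeneousComponent d f) w + ∑ _j ∈ Finset.range d, (0:ℝ))) := by
    apply Tendsto.add
    · exact ((hgcont d).tendsto w).comp hy
    · apply tendsto_finset_sum
      intro j hj
      rw [Finset.mem_range] at hj
      have h1 : Tendsto (fun k => ((t k) ^ (d - j))⁻¹) atTop (𝓝 0) :=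
        Tendsto.inv_tendsto_atTop ((tendsto_pow_atTop (by omega : d - j ≠ 0)).comp ht)
      have h2 : Tendsto (fun k => evalP (homogeneousComponent j f) (u k)) atTop
          (𝓝 (evalP (homogeneousComponent j f) w)) := ((hgcont j).tendsto w).comp hy
      simpa using h1.mul h2
  have : Tendsto
      (fun k => evalP (homogeneousComponent d f) (u k) +
        ∑ j ∈ Finset.range d, ((t k) ^ (d - j))⁻¹ * evalP (homogeneousComponent j f) (u k))
      atTop (𝓝 (evalP (homogeneousComponent d f) w)) := by
    simpa using hlim
  exact this.congr' heq.symm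



/-- Frank–Wolfe type theorem: if `OP(K,f)` is regular (i.e. `Sol(K∞, f_d)` is bounded) and `f`
is bounded from below on `K`, then `f` is coercive on `K` and `Sol(K,f)` is nonempty and
compact. -/
theorem stmt2 {n d : ℕ} (hd : 1 ≤ d) (K : Set (En n)) (hKne : K.Nonempty) (hKcl : IsClosed K)
    (f : MvPolynomial (Fin n) ℝ) (hdeg : f.totalDegree = d)
    (hreg : IsBounded (solSet (asympCone K) (evalP (homogeneousComponent d f))))
    (hbdd : BddBelow (evalP f '' K)) :
    (∀ M : ℝ, ∃ R : ℝ, ∀ x ∈ K, R < ‖x‖ → M < evalP f x) ∧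
    (solSet K (evalP f)).Nonempty ∧ IsCompact (solSet K (evalP f)) := by
  obtain ⟨m, hm⟩ := hbdd
  have hmK : ∀ x ∈ K, m ≤ evalP f x := fun x hx => hm ⟨x, hx, rfl⟩
  -- the top homogeneous part is nonnegative on the asymptotic cone
  have hnonneg : ∀ w ∈ asympCone K, 0 ≤ evalP (homogeneousComponent d f) w := by
    rintro w ⟨t, y, hyK, ht, hy⟩
    have hlim := tendsto_scaled hd f hdeg t y w ht hy
    have hinv : Tendsto (fun k => ((t k) ^ d)⁻¹) atTop (𝓝 0) :=
      Tendsto.inv_tendsto_atTop ((tendsto_pow_atTop (by omega : d ≠ 0)).comp ht)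
    have hlim0 : Tendsto (fun k => ((t k) ^ d)⁻¹ * m) atTop (𝓝 0) := by
      simpa using hinv.mul_const m
    refine le_of_tendsto_of_tendsto hlim0 hlim ?_
    filter_upwards [ht.eventually_gt_atTop 0] with k hk
    have hpos : (0:ℝ) < ((t k) ^ d)⁻¹ := by positivity
    exact mul_le_mul_of_nonneg_left (hmK _ (hyK k)) hpos.le
  -- coercivity
  have coer : ∀ M : ℝ, ∃ R : ℝ, ∀ x ∈ K, R < ‖x‖ → M < evalP f x := by
    intro M
    by_contra hcon
    push_neg at hcon
    choose x hxK hxn hxf using hcon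
    set z : ℕ → En n := fun k => x (k : ℝ) with hz
    have hzn : ∀ k : ℕ, (k : ℝ) < ‖z k‖ := fun k => hxn _
    have hz0 : ∀ k : ℕ, (0:ℝ) < ‖z k‖ :=
      fun k => lt_of_le_of_lt (Nat.cast_nonneg k) (hzn k)
    set u : ℕ → En n := fun k => ‖z k‖⁻¹ • z k with huu
    have hus : ∀ k, u k ∈ Metric.sphere (0 : En n) 1 := by
      intro k
      rw [mem_sphere_zero_iff_norm, huu]
      simp [norm_smul, abs_of_pos (inv_pos.mpr (hz0 k)),
        inv_mul_cancel₀ (ne_of_gt (hz0 k))]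
    obtain ⟨v, hvs, φ, hφ, huv⟩ := (isCompact_sphere (0 : En n) 1).tendsto_subseq hus
    have htφ : Tendsto (fun k => ‖z (φ k)‖) atTop atTop := by
      apply tendsto_atTop_mono
        (fun k => le_of_lt (lt_of_le_of_lt (Nat.cast_le.mpr hφ.le_apply) (hzn (φ k))))
      exact tendsto_natCast_atTop_atTop
    have huv' : Tendsto (fun k => ‖z (φ k)‖⁻¹ • z (φ k)) atTop (𝓝 v) := huv
    have hvcone : v ∈ asympCone K := ⟨fun k => ‖z (φ k)‖, fun k => z (φ k),
      fun k => hxK _, htφ, huv'⟩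
    have hgv_le : evalP (homogeneousComponent d f) v ≤ 0 := by
      have hlim := tendsto_scaled hd f hdeg _ _ v htφ huv'
      have hinv : Tendsto (fun k => (‖z (φ k)‖ ^ d)⁻¹) atTop (𝓝 0) :=
        Tendsto.inv_tendsto_atTop ((tendsto_pow_atTop (by omega : d ≠ 0)).comp htφ)
      have hlimM : Tendsto (fun k => (‖z (φ k)‖ ^ d)⁻¹ * M) atTop (𝓝 0) := by
        simpa using hinv.mul_const M
      refine le_of_tendsto_of_tendsto hlim hlimM ?_
      filter_upwards [htφ.eventually_gt_atTop 0] with k hk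
      have hpos : (0:ℝ) < (‖z (φ k)‖ ^ d)⁻¹ := by positivity
      exact mul_le_mul_of_nonneg_left (hxf _) hpos.le
    have hgv : evalP (homogeneousComponent d f) v = 0 :=
      le_antisymm hgv_le (hnonneg v hvcone)
    obtain ⟨C, hC⟩ := isBounded_iff_forall_norm_le.mp hreg
    set c : ℝ := max 1 (C + 1) with hc
    have hc1 : (1:ℝ) ≤ c := le_max_left _ _
    have hcC : C < c := lt_of_lt_of_le (lt_add_one C) (le_max_right _ _)
    have hcv_cone : c • v ∈ asympCone K := by
      obtain ⟨t, y, hyK, ht, hy⟩ := hvcone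
      refine ⟨fun k => t k / c, y, hyK, ht.atTop_div_const (by linarith), ?_⟩
      have heq : ∀ k, (t k / c)⁻¹ • y k = c • ((t k)⁻¹ • y k) := by
        intro k
        rw [inv_div, div_eq_mul_inv, mul_comm, mul_smul]
        rw [smul_comm]
      exact (Tendsto.congr (fun k => (heq k).symm) (hy.const_smul c))
    have hsol : c • v ∈ solSet (asympCone K) (evalP (homogeneousComponent d f)) := by
      refine ⟨hcv_cone, fun yy hyy => ?_⟩
      rw [evalP_smul (homogeneousComponent_isHomogeneous d f), hgv, mul_zero]
      exact hnonneg yy hyy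
    have hnle := hC _ hsol
    rw [norm_smul] at hnle
    have hvnorm : ‖v‖ = 1 := mem_sphere_zero_iff_norm.mp hvs
    rw [hvnorm, mul_one, Real.norm_eq_abs, abs_of_pos (by linarith)] at hnle
    linarith
  -- existence of a minimizer
  obtain ⟨x0, hx0⟩ := hKne
  obtain ⟨R0, hR0⟩ := coer (evalP f x0)
  set r : ℝ := max R0 ‖x0‖ with hr
  have hx0ball : x0 ∈ Metric.closedBall (0 : En n) r := by
    rw [Metric.mem_closedBall, dist_zero_right]
    exact le_max_right _ _
  have hcpt : IsCompact (K ∩ Metric.closedBall 0 r) :=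
    (isCompact_closedBall _ _).inter_left hKcl
  have hne' : (K ∩ Metric.closedBall 0 r).Nonempty := ⟨x0, hx0, hx0ball⟩
  obtain ⟨zz, hzz, hzmin⟩ := hcpt.exists_isMinOn hne' ((evalP_cont f).continuousOn)
  have hzglob : ∀ yy ∈ K, evalP f zz ≤ evalP f yy := by
    intro yy hyy
    by_cases hyb : ‖yy‖ ≤ r
    · exact isMinOn_iff.mp hzmin yy
        ⟨hyy, by rwa [Metric.mem_closedBall, dist_zero_right]⟩
    · push_neg at hyb
      have h1 : evalP f x0 < evalP f yy :=
        hR0 yy hyy (lt_of_le_of_lt (le_max_left _ _) hyb)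
      have h2 : evalP f zz ≤ evalP f x0 := isMinOn_iff.mp hzmin x0 ⟨hx0, hx0ball⟩
      linarith
  have hSolne : (solSet K (evalP f)).Nonempty := ⟨zz, hzz.1, hzglob⟩
  have hSolcl : IsClosed (solSet K (evalP f)) := by
    have hset : solSet K (evalP f)
        = K ∩ ⋂ yy ∈ K, {x | evalP f x ≤ evalP f yy} := by
      ext x
      simp only [solSet, Set.mem_setOf_eq, Set.mem_inter_iff, Set.mem_iInter]
    rw [hset]
    exact hKcl.inter (isClosed_biInter fun yy _ =>
      isClosed_le (evalP_cont f) continuous_const)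
  obtain ⟨R1, hR1⟩ := coer (evalP f zz)
  have hSolbd : IsBounded (solSet K (evalP f)) := by
    apply (Metric.isBounded_closedBall (x := (0:En n)) (r := R1)).subset
    intro x hx
    rw [Metric.mem_closedBall, dist_zero_right]
    by_contra hxr
    push_neg at hxr
    have h1 := hR1 x hx.1 hxr
    have h2 := hx.2 zz hzz.1
    linarith
  exact ⟨coer, hSolne, Metric.isCompact_of_isClosed_isBounded hSolcl hSolbd⟩


end
end

section
/- (Eaves type theorem, sufficiency) Let K ⊆ ℝ^n be a nonempty closed convex set and f : ℝ^n → ℝ a polynomial of degree d ≥ 1 that is pseudoconvex on K, and suppose OP(K,f) is non-regular (i.e., Sol(K∞, f_d) is unbounded). If for every v ∈ Sol(K∞, f_d) \ {0} there exists x ∈ K with ⟨∇f(x), v⟩ > 0, then Sol(K,f) is nonempty and compact. -/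
open Filter Topology MvPolynomial Bornology
open scoped RealInnerProductSpace Pointwise

noncomputable section

namespace EavesAux

variable {n : ℕ}

lemma hasDerivAt_eval_line (f : MvPolynomial (Fin n) ℝ) (x u : Fin n → ℝ) (t₀ : ℝ) :
    HasDerivAt (fun t : ℝ => eval (fun i => x i + t * u i) f)
      (∑ i, eval (fun i => x i + t₀ * u i) (pderiv i f) * u i) t₀ := by
  induction f using MvPolynomial.induction_on with
  | C a =>
      simpa [pderiv_C] using hasDerivAt_const t₀ a
  | add p q hp hq =>
      simpa [map_add, add_mul, Finset.sum_add_distrib] using hp.fun_add hq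
  | mul_X p j hp =>
      have h2 : HasDerivAt (fun t : ℝ => x j + t * u j) (u j) t₀ := by
        simpa using ((hasDerivAt_id t₀).mul_const (u j)).const_add (x j)
      have h3 := hp.fun_mul h2
      have heq : (∑ i, eval (fun i => x i + t₀ * u i) (pderiv i (p * X j)) * u i)
          = (∑ i, eval (fun i => x i + t₀ * u i) (pderiv i p) * u i) * (x j + t₀ * u j)
            + eval (fun i => x i + t₀ * u i) p * u j := by
        simp only [pderiv_mul, map_add, map_mul, eval_X, pderiv_X, add_mul, Finset.sum_add_distrib,
          Finset.sum_mul]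
        congr 1
        · apply Finset.sum_congr rfl; intro i _; ring
        · rw [Finset.sum_eq_single j]
          · simp
          · intro b _ hb
            simp [Pi.single_apply, (Ne.symm hb)]
          · simp
      rw [heq]
      simpa [map_mul, eval_X, mul_comm] using h3

lemma inner_polyGrad (f : MvPolynomial (Fin n) ℝ) (y u : En n) :
    ⟪polyGrad f y, u⟫ = ∑ i, eval (fun j => y j) (pderiv i f) * u i := by
  simp [PiLp.inner_apply, RCLike.inner_apply, polyGrad]
  exact Finset.sum_congr rfl fun _ _ => mul_comm _ _

lemma hasDerivAt_evalP_line (f : MvPolynomial (Fin n) ℝ) (x u : En n) (t₀ : ℝ) :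
    HasDerivAt (fun t : ℝ => evalP f (x + t • u)) ⟪polyGrad f (x + t₀ • u), u⟫ t₀ := by
  rw [inner_polyGrad]
  have h := hasDerivAt_eval_line f (fun i => x i) (fun i => u i) t₀
  have harg : ∀ t : ℝ, (fun i => (x + t • u) i) = (fun i => x i + t * u i) := by
    intro t; funext i; simp [PiLp.add_apply, PiLp.smul_apply, smul_eq_mul]
  have h2 : (fun t : ℝ => evalP f (x + t • u)) = fun t => eval (fun i => x i + t * u i) f := by
    funext t; rw [evalP, harg t]
  rw [h2, harg t₀]
  exact h

lemma continuous_evalP (f : MvPolynomial (Fin n) ℝ) : Continuous (evalP f) := by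
  have h : Continuous fun x : En n => (fun i => x i : Fin n → ℝ) :=
    continuous_pi fun i => (continuous_apply (A := fun _ : Fin n => ℝ) i).comp (PiLp.continuous_ofLp 2 _)
  exact (MvPolynomial.continuous_eval f).comp h

lemma eval_homog_smul {m : ℕ} {φ : MvPolynomial (Fin n) ℝ} (hφ : φ.IsHomogeneous m)
    (c : ℝ) (x : Fin n → ℝ) : eval (fun i => c * x i) φ = c ^ m * eval x φ := by
  rw [eval_eq', eval_eq', Finset.mul_sum]
  refine Finset.sum_congr rfl fun e he => ?_
  have h1 : e.degree = m := by
    by_contra h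
    exact (mem_support_iff.mp he) (hφ.coeff_eq_zero h)
  have hdeg : ∑ i, e i = m := by
    rw [← h1, Finsupp.degree]
    exact (Finset.sum_subset (Finset.subset_univ _)
      (fun i _ hi => Finsupp.notMem_support_iff.mp hi)).symm
  rw [← hdeg]
  simp only [mul_pow, Finset.prod_mul_distrib, Finset.prod_pow_eq_pow_sum]
  ring

lemma evalP_homog_smul (j : ℕ) (f : MvPolynomial (Fin n) ℝ) (c : ℝ) (w : En n) :
    evalP (homogeneousComponent j f) (c • w) = c ^ j * evalP (homogeneousComponent j f) w := by
  have h := eval_homog_smul (homogeneousComponent_isHomogeneous j f) c (fun i => w i)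
  rw [evalP, evalP]
  have h4 : (fun i => (c • w) i) = fun i => c * w i := by
    funext i; simp [PiLp.smul_apply, smul_eq_mul]
  rw [h4, h]

lemma evalP_decomp {d : ℕ} (f : MvPolynomial (Fin n) ℝ) (hdeg : f.totalDegree = d) (v : En n) :
    evalP f v = ∑ j ∈ Finset.range (d + 1), evalP (homogeneousComponent j f) v := by
  have h : f = ∑ j ∈ Finset.range (d + 1), homogeneousComponent j f := by
    rw [← hdeg]; exact (MvPolynomial.sum_homogeneousComponent f).symm
  conv_lhs => rw [evalP, h]
  rw [map_sum]
  rfl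

lemma right_deriv_nonneg {g : ℝ → ℝ} {c : ℝ} (h : HasDerivAt g c 0)
    (hg : ∀ᶠ t in 𝓝[>] (0:ℝ), g 0 ≤ g t) : 0 ≤ c := by
  have hs : Tendsto (slope g 0) (𝓝[>] (0:ℝ)) (𝓝 c) :=
    (hasDerivAt_iff_tendsto_slope.mp h).mono_left
      (nhdsWithin_mono 0 (fun t ht => ne_of_gt ht))
  refine ge_of_tendsto hs ?_
  filter_upwards [hg, self_mem_nhdsWithin] with t h1 h2
  have ht : (0:ℝ) < t := h2
  rw [slope_def_field]
  have h5 : (0:ℝ) ≤ g t - g 0 := sub_nonneg.mpr h1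
  apply div_nonneg h5; linarith

lemma right_deriv_zero {g : ℝ → ℝ} {c : ℝ} (h : HasDerivAt g c 0)
    (hg : ∀ t > (0:ℝ), g t = g 0) : c = 0 := by
  have hs : Tendsto (slope g 0) (𝓝[>] (0:ℝ)) (𝓝 c) :=
    (hasDerivAt_iff_tendsto_slope.mp h).mono_left
      (nhdsWithin_mono 0 (fun t ht => ne_of_gt ht))
  have hs0 : Tendsto (slope g 0) (𝓝[>] (0:ℝ)) (𝓝 0) := by
    refine Tendsto.congr' ?_ tendsto_const_nhds
    filter_upwards [self_mem_nhdsWithin] with t ht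
    rw [slope_def_field, hg t ht, sub_self, zero_div]
  exact tendsto_nhds_unique hs hs0

/-- Asymptotic "limit of normalized minimizing sequence" lemma. -/
lemma homog_le_zero {d : ℕ} (hd : 1 ≤ d) (f : MvPolynomial (Fin n) ℝ) (hdeg : f.totalDegree = d)
    (t : ℕ → ℝ) (ht : Tendsto t atTop atTop) (w : ℕ → En n) (u : En n)
    (hw : Tendsto w atTop (𝓝 u)) (B : ℝ) (hB : ∀ᶠ k in atTop, evalP f (t k • w k) ≤ B) :
    evalP (homogeneousComponent d f) u ≤ 0 := by
  set F : ℕ → En n → ℝ := fun j v => evalP (homogeneousComponent j f) v with hF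
  -- the rescaled values
  have hpos : ∀ᶠ k in atTop, 0 < t k := ht.eventually_gt_atTop 0
  have hinv : Tendsto (fun k => (t k)⁻¹) atTop (𝓝 0) := ht.inv_tendsto_atTop
  have hkey : ∀ᶠ k in atTop, ((t k)⁻¹) ^ d * evalP f (t k • w k)
      = ∑ j ∈ Finset.range (d + 1), ((t k)⁻¹) ^ (d - j) * F j (w k) := by
    filter_upwards [hpos] with k hk
    rw [evalP_decomp f hdeg, Finset.mul_sum]
    refine Finset.sum_congr rfl fun j hj => ?_
    have hj' : j ≤ d := Nat.lt_succ_iff.mp (Finset.mem_range.mp hj)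
    rw [evalP_homog_smul]
    have hdd : d = j + (d - j) := (Nat.add_sub_cancel' hj').symm
    rw [inv_pow, inv_pow]
    rw [hdd, pow_add, Nat.add_sub_cancel_left]
    field_simp
    rw [hF]
  have hterm : ∀ j ∈ Finset.range (d + 1),
      Tendsto (fun k => ((t k)⁻¹) ^ (d - j) * F j (w k)) atTop
        (𝓝 ((0:ℝ) ^ (d - j) * F j u)) := by
    intro j _
    exact ((hinv.pow (d - j)).mul (((continuous_evalP _).tendsto u).comp hw))
  have hsum : Tendsto (fun k => ∑ j ∈ Finset.range (d + 1), ((t k)⁻¹) ^ (d - j) * F j (w k))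
      atTop (𝓝 (∑ j ∈ Finset.range (d + 1), (0:ℝ) ^ (d - j) * F j u)) :=
    tendsto_finset_sum _ hterm
  have hsumval : (∑ j ∈ Finset.range (d + 1), (0:ℝ) ^ (d - j) * F j u) = F d u := by
    rw [Finset.sum_eq_single d]
    · simp
    · intro j hj hne
      have hj' : j ≤ d := Nat.lt_succ_iff.mp (Finset.mem_range.mp hj)
      have : d - j ≠ 0 := Nat.sub_ne_zero_of_lt (lt_of_le_of_ne hj' hne)
      rw [zero_pow this, zero_mul]
    · intro h; exact absurd (Finset.self_mem_range_succ d) h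
  have hlim : Tendsto (fun k => ((t k)⁻¹) ^ d * evalP f (t k • w k)) atTop (𝓝 (F d u)) := by
    have h9 := hsum.congr' (by filter_upwards [hkey] with k hk; exact hk.symm :
      (fun k => ∑ j ∈ Finset.range (d + 1), ((t k)⁻¹) ^ (d - j) * F j (w k)) =ᶠ[atTop]
        fun k => ((t k)⁻¹) ^ d * evalP f (t k • w k))
    rwa [hsumval] at h9
  have hlim0 : Tendsto (fun k => ((t k)⁻¹) ^ d * B) atTop (𝓝 0) := by
    have h8 := (hinv.pow d).mul_const B
    rw [zero_pow (by omega : d ≠ 0), zero_mul] at h8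
    exact h8
  refine le_of_tendsto_of_tendsto hlim hlim0 ?_
  filter_upwards [hB, hpos] with k h1 h2
  have : (0:ℝ) ≤ ((t k)⁻¹) ^ d := by positivity
  exact mul_le_mul_of_nonneg_left h1 this

lemma zero_mem_asympCone {K : Set (En n)} (hKne : K.Nonempty) : (0 : En n) ∈ asympCone K := by
  obtain ⟨x₀, hx₀⟩ := hKne
  have h1 : Tendsto (fun k : ℕ => (k : ℝ) + 1) atTop atTop :=
    tendsto_atTop_add_const_right _ 1 tendsto_natCast_atTop_atTop
  have h2 : Tendsto (fun k : ℕ => ((k : ℝ) + 1)⁻¹ • x₀) atTop (𝓝 (0 : En n)) := by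
    have h : Tendsto (fun k : ℕ => ((k : ℝ) + 1)⁻¹) atTop (𝓝 0) := h1.inv_tendsto_atTop
    simpa using h.smul_const x₀
  exact ⟨fun k => (k : ℝ) + 1, fun _ => x₀, fun _ => hx₀, h1, h2⟩

lemma smul_mem_asympCone {K : Set (En n)} {v : En n} {c : ℝ} (hc : 0 < c)
    (hv : v ∈ asympCone K) : c • v ∈ asympCone K := by
  obtain ⟨t, x, hx, ht, hlim⟩ := hv
  have h : ∀ k, c • ((t k)⁻¹ • x k) = (t k / c)⁻¹ • x k := by
    intro k
    rw [smul_smul, div_eq_mul_inv, mul_inv, inv_inv, mul_comm]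
  exact ⟨fun k => t k / c, x, hx, ht.atTop_div_const hc,
    Tendsto.congr h (hlim.const_smul c)⟩

lemma ball_min_global {K : Set (En n)} (hKcv : Convex ℝ K)
    {f : MvPolynomial (Fin n) ℝ}
    (hpc : ∀ x ∈ K, ∀ y ∈ K, 0 ≤ ⟪polyGrad f x, y - x⟫ → evalP f x ≤ evalP f y)
    {z : En n} (hz : z ∈ K) {R : ℝ} (hzR : ‖z‖ < R)
    (hmin : ∀ y ∈ K, ‖y‖ ≤ R → evalP f z ≤ evalP f y) :
    z ∈ solSet K (evalP f) := by
  refine ⟨hz, fun y hy => ?_⟩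
  refine hpc z hz y hy ?_
  have hder := hasDerivAt_evalP_line f z (y - z) 0
  rw [zero_smul, add_zero] at hder
  refine right_deriv_nonneg hder ?_
  have hε : 0 < min 1 ((R - ‖z‖) / (‖y - z‖ + 1)) := by
    apply lt_min one_pos
    apply div_pos (by linarith) (by positivity)
  filter_upwards [Ioo_mem_nhdsGT_of_mem (Set.mem_Ico.mpr ⟨le_refl (0:ℝ), hε⟩)] with t ht
  obtain ⟨ht0, htε⟩ := ht
  have ht1 : t ≤ 1 := le_of_lt (lt_of_lt_of_le htε (min_le_left _ _))
  have htb : t < (R - ‖z‖) / (‖y - z‖ + 1) := lt_of_lt_of_le htε (min_le_right _ _)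
  have hmem : z + t • (y - z) ∈ K := by
    have h := hKcv hz hy (by linarith : (0:ℝ) ≤ 1 - t) (le_of_lt ht0) (by ring)
    have he : z + t • (y - z) = (1 - t) • z + t • y := by module
    rw [he]; exact h
  have hnorm : ‖z + t • (y - z)‖ ≤ R := by
    have hq := (lt_div_iff₀ (by positivity : (0:ℝ) < ‖y - z‖ + 1)).mp htb
    calc ‖z + t • (y - z)‖ ≤ ‖z‖ + ‖t • (y - z)‖ := norm_add_le _ _
      _ = ‖z‖ + t * ‖y - z‖ := by rw [norm_smul, Real.norm_of_nonneg (le_of_lt ht0)]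
      _ ≤ ‖z‖ + t * (‖y - z‖ + 1) := by nlinarith
      _ ≤ R := by linarith
  show evalP f (z + (0:ℝ) • (y - z)) ≤ _
  rw [zero_smul, add_zero]
  exact hmin _ hmem hnorm

lemma segment_sol {K : Set (En n)} (hKcv : Convex ℝ K)
    {f : MvPolynomial (Fin n) ℝ}
    (hpc : ∀ x ∈ K, ∀ y ∈ K, 0 ≤ ⟪polyGrad f x, y - x⟫ → evalP f x ≤ evalP f y)
    {x z : En n} (hx : x ∈ solSet K (evalP f)) (hz : z ∈ solSet K (evalP f))
    {s : ℝ} (hs : s ∈ Set.Icc (0:ℝ) 1) :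
    x + s • (z - x) ∈ solSet K (evalP f) := by
  obtain ⟨hxK, hxmin⟩ := hx
  obtain ⟨hzK, hzmin⟩ := hz
  have hfz : evalP f z = evalP f x := le_antisymm (hzmin x hxK) (hxmin z hzK)
  set g : ℝ → ℝ := fun t => evalP f (x + t • (z - x)) with hg
  have hgc : Continuous g := by
    apply (continuous_evalP f).comp
    exact continuous_const.add (continuous_id.smul continuous_const)
  have hmem : ∀ t ∈ Set.Icc (0:ℝ) 1, x + t • (z - x) ∈ K := by
    intro t ht
    have h := hKcv hxK hzK (by linarith [ht.2] : (0:ℝ) ≤ 1 - t) ht.1 (by ring)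
    have he : x + t • (z - x) = (1 - t) • x + t • z := by module
    rw [he]; exact h
  obtain ⟨s', hs'I, hmax⟩ := isCompact_Icc.exists_isMaxOn (Set.nonempty_Icc.mpr zero_le_one)
    hgc.continuousOn
  have hg0 : g 0 = evalP f x := by rw [hg]; simp
  have hg1 : g 1 = evalP f x := by rw [hg]; simp [hfz]
  have hle : g s' ≤ evalP f x := by
    by_contra h
    push_neg at h
    have hs'0 : s' ≠ 0 := by intro he; rw [he, hg0] at h; exact lt_irrefl _ h
    have hs'1 : s' ≠ 1 := by intro he; rw [he, hg1] at h; exact lt_irrefl _ h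
    have hs'I' : s' ∈ Set.Ioo (0:ℝ) 1 :=
      ⟨lt_of_le_of_ne hs'I.1 (Ne.symm hs'0), lt_of_le_of_ne hs'I.2 hs'1⟩
    have hloc : IsLocalMax g s' := hmax.isLocalMax (Icc_mem_nhds hs'I'.1 hs'I'.2)
    have hder := hasDerivAt_evalP_line f x (z - x) s'
    have hzero := hloc.hasDerivAt_eq_zero hder
    have hwK := hmem s' hs'I
    have hinner : (0:ℝ) ≤ ⟪polyGrad f (x + s' • (z - x)), z - (x + s' • (z - x))⟫ := by
      have he : z - (x + s' • (z - x)) = (1 - s') • (z - x) := by module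
      rw [he, real_inner_smul_right, hzero, mul_zero]
    have hch := hpc _ hwK z hzK hinner
    rw [hfz] at hch
    exact absurd (lt_of_lt_of_le h hch) (lt_irrefl _)
  refine ⟨hmem s hs, fun y hy => ?_⟩
  exact le_trans (le_trans (hmax hs) hle) (hxmin y hy)

lemma solSet_closed {K : Set (En n)} (hKcl : IsClosed K) (f : MvPolynomial (Fin n) ℝ) :
    IsClosed (solSet K (evalP f)) := by
  have h : solSet K (evalP f) = K ∩ ⋂ y ∈ K, {x | evalP f x ≤ evalP f y} := by
    ext x
    simp only [solSet, Set.mem_setOf_eq, Set.mem_inter_iff, Set.mem_iInter]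
  rw [h]
  exact hKcl.inter (isClosed_biInter fun y _ =>
    isClosed_le (continuous_evalP f) continuous_const)

lemma extract_dir {K : Set (En n)} {z : ℕ → En n} (hz : ∀ k, z k ∈ K)
    (hn : ∀ k : ℕ, (k : ℝ) + 1 ≤ ‖z k‖) :
    ∃ (u : En n) (φ : ℕ → ℕ), StrictMono φ ∧ ‖u‖ = 1 ∧ u ∈ asympCone K ∧
      Tendsto (fun j => ‖z (φ j)‖⁻¹ • z (φ j)) atTop (𝓝 u) ∧
      Tendsto (fun j => ‖z (φ j)‖) atTop atTop := by
  have hzpos : ∀ k, 0 < ‖z k‖ := fun k => lt_of_lt_of_le (by positivity) (hn k)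
  set u' : ℕ → En n := fun k => ‖z k‖⁻¹ • z k with hu'
  have hsph : ∀ k, u' k ∈ Metric.sphere (0 : En n) 1 := by
    intro k
    rw [Metric.mem_sphere, dist_zero_right, hu']
    simp only [norm_smul, norm_inv, norm_norm]
    exact inv_mul_cancel₀ (hzpos k).ne'
  obtain ⟨u, huS, φ, hφ, hconv⟩ := (isCompact_sphere (0 : En n) 1).tendsto_subseq hsph
  have hnorm1 : ‖u‖ = 1 := by
    rw [Metric.mem_sphere, dist_zero_right] at huS; exact huS
  have htend : Tendsto (fun j => ‖z (φ j)‖) atTop atTop := by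
    refine tendsto_atTop_mono (fun j => ?_) tendsto_natCast_atTop_atTop
    have h0 : (j : ℝ) ≤ (φ j : ℝ) := Nat.cast_le.mpr hφ.le_apply
    have h1 : (j : ℝ) ≤ (φ j : ℝ) + 1 := by linarith
    exact le_trans h1 (hn (φ j))
  exact ⟨u, φ, hφ, hnorm1,
    ⟨fun j => ‖z (φ j)‖, fun j => z (φ j), fun j => hz _, htend, hconv⟩, hconv, htend⟩

end EavesAux


/-- Eaves type theorem (sufficiency): if `K` is nonempty closed convex, `f` is a pseudoconvex
polynomial of degree `d ≥ 1` on `K`, `OP(K,f)` is non-regular, and for every nonzero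
`v ∈ Sol(K∞, f_d)` there is `x ∈ K` with `⟨∇f(x), v⟩ > 0`, then `Sol(K,f)` is nonempty and
compact. -/
theorem stmt5 {n d : ℕ} (hd : 1 ≤ d) (K : Set (En n)) (hKne : K.Nonempty) (hKcl : IsClosed K)
    (hKcv : Convex ℝ K) (f : MvPolynomial (Fin n) ℝ) (hdeg : f.totalDegree = d)
    (hpc : ∀ x ∈ K, ∀ y ∈ K, 0 ≤ ⟪polyGrad f x, y - x⟫ → evalP f x ≤ evalP f y)
    (hnonreg : ¬ IsBounded (solSet (asympCone K) (evalP (homogeneousComponent d f))))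
    (ha : ∀ v ∈ solSet (asympCone K) (evalP (homogeneousComponent d f)), v ≠ 0 →
      ∃ x ∈ K, 0 < ⟪polyGrad f x, v⟫) :
    (solSet K (evalP f)).Nonempty ∧ IsCompact (solSet K (evalP f)) := by
  classical
  obtain ⟨xb, hxb⟩ := hKne
  -- Basic facts about Sol(K∞, f_d)
  have hSolne : (solSet (asympCone K) (evalP (homogeneousComponent d f))).Nonempty := by
    rcases Set.eq_empty_or_nonempty
      (solSet (asympCone K) (evalP (homogeneousComponent d f))) with h | h
    · rw [h] at hnonreg; exact absurd Bornology.isBounded_empty hnonreg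
    · exact h
  obtain ⟨v₀, hv₀K, hv₀min⟩ := hSolne
  have hFd0 : evalP (homogeneousComponent d f) (0 : En n) = 0 := by
    have h := EavesAux.evalP_homog_smul d f 0 (0 : En n)
    rw [zero_smul, zero_pow (by omega : d ≠ 0), zero_mul] at h
    exact h
  have h2d : (2:ℝ) ≤ 2 ^ d := by
    calc (2:ℝ) = 2 ^ 1 := (pow_one 2).symm
    _ ≤ 2 ^ d := pow_le_pow_right₀ one_le_two hd
  have hv₀0 : evalP (homogeneousComponent d f) v₀ = 0 := by
    have h1 : evalP (homogeneousComponent d f) v₀ ≤ 0 := by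
      have h := hv₀min 0 (EavesAux.zero_mem_asympCone ⟨xb, hxb⟩)
      rwa [hFd0] at h
    have h2 := hv₀min ((2:ℝ) • v₀) (EavesAux.smul_mem_asympCone two_pos hv₀K)
    rw [EavesAux.evalP_homog_smul] at h2
    nlinarith
  have hcrit : ∀ u : En n, u ∈ asympCone K → evalP (homogeneousComponent d f) u ≤ 0 →
      u ∈ solSet (asympCone K) (evalP (homogeneousComponent d f)) := by
    intro u hu hle
    exact ⟨hu, fun y hy => le_trans hle (hv₀0 ▸ hv₀min y hy)⟩
  -- Key extraction step
  have hkey : ∀ z : ℕ → En n, (∀ k, z k ∈ K) → (∀ k : ℕ, (k:ℝ) + 1 ≤ ‖z k‖) →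
      (∀ k, evalP f (z k) ≤ evalP f xb) →
      ∃ (u : En n) (φ : ℕ → ℕ) (x : En n), StrictMono φ ∧ ‖u‖ = 1 ∧ x ∈ K ∧
        0 < ⟪polyGrad f x, u⟫ ∧
        Tendsto (fun j => ‖z (φ j)‖⁻¹ • z (φ j)) atTop (𝓝 u) ∧
        Tendsto (fun j => ‖z (φ j)‖) atTop atTop ∧
        (∀ᶠ j in atTop, evalP f x ≤ evalP f (z (φ j))) := by
    intro z hzK hzn hzB
    obtain ⟨u, φ, hφ, hu1, huC, hconv, htend⟩ := EavesAux.extract_dir hzK hzn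
    have hFdle : evalP (homogeneousComponent d f) u ≤ 0 := by
      refine EavesAux.homog_le_zero hd f hdeg (fun j => ‖z (φ j)‖) htend
        (fun j => ‖z (φ j)‖⁻¹ • z (φ j)) u hconv (evalP f xb) ?_
      refine Filter.Eventually.of_forall fun j => ?_
      have hpos : (0:ℝ) < ‖z (φ j)‖ := lt_of_lt_of_le (by positivity) (hzn (φ j))
      rw [smul_inv_smul₀ hpos.ne']
      exact hzB (φ j)
    have hune : u ≠ 0 := by
      intro h; rw [h, norm_zero] at hu1; exact one_ne_zero hu1.symm
    obtain ⟨x, hxK, hip⟩ := ha u (hcrit u huC hFdle) hune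
    refine ⟨u, φ, x, hφ, hu1, hxK, hip, hconv, htend, ?_⟩
    have hil : Tendsto (fun j => ⟪polyGrad f x, ‖z (φ j)‖⁻¹ • z (φ j)⟫) atTop
        (𝓝 ⟪polyGrad f x, u⟫) := tendsto_const_nhds.inner hconv
    have hprod : Tendsto (fun j => ‖z (φ j)‖ * ⟪polyGrad f x, ‖z (φ j)‖⁻¹ • z (φ j)⟫)
        atTop atTop := htend.atTop_mul_pos hip hil
    have hev : ∀ᶠ j in atTop, 0 ≤ ⟪polyGrad f x, z (φ j) - x⟫ := by
      filter_upwards [hprod.eventually_ge_atTop ⟪polyGrad f x, x⟫] with j hj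
      have hpos : (0:ℝ) < ‖z (φ j)‖ := lt_of_lt_of_le (by positivity) (hzn (φ j))
      have hzz : ⟪polyGrad f x, z (φ j)⟫
          = ‖z (φ j)‖ * ⟪polyGrad f x, ‖z (φ j)‖⁻¹ • z (φ j)⟫ := by
        conv_lhs => rw [← smul_inv_smul₀ hpos.ne' (z (φ j))]
        rw [real_inner_smul_right]
      rw [inner_sub_right, hzz]
      linarith
    filter_upwards [hev] with j hj
    exact hpc x hxK _ (hzK (φ j)) hj
  -- Part A: nonemptiness
  have hne : (solSet K (evalP f)).Nonempty := by
    set r : ℕ → ℝ := fun k => ‖xb‖ + k + 1 with hr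
    have hrk : ∀ k : ℕ, (k:ℝ) + 1 ≤ r k := by
      intro k; rw [hr]; have := norm_nonneg xb; simp only []; linarith
    have hxbr : ∀ k, ‖xb‖ ≤ r k := by
      intro k; rw [hr]; have : (0:ℝ) ≤ (k:ℝ) := Nat.cast_nonneg k; simp only []; linarith
    have hex : ∀ k : ℕ, ∃ zz, zz ∈ K ∧ ‖zz‖ ≤ r k ∧
        ∀ y ∈ K, ‖y‖ ≤ r k → evalP f zz ≤ evalP f y := by
      intro k
      have hcpt : IsCompact (K ∩ Metric.closedBall 0 (r k)) :=
        (isCompact_closedBall 0 (r k)).inter_left hKcl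
      have hne' : (K ∩ Metric.closedBall 0 (r k)).Nonempty :=
        ⟨xb, hxb, mem_closedBall_zero_iff.mpr (hxbr k)⟩
      obtain ⟨zz, hzS, hzmin⟩ := hcpt.exists_isMinOn hne'
        (EavesAux.continuous_evalP f).continuousOn
      exact ⟨zz, hzS.1, mem_closedBall_zero_iff.mp hzS.2,
        fun y hy hyr => hzmin ⟨hy, mem_closedBall_zero_iff.mpr hyr⟩⟩
    choose z hzK hzle hzmin using hex
    by_cases hcase : ∃ k, ‖z k‖ < r k
    · obtain ⟨k, hk⟩ := hcase
      exact ⟨z k, EavesAux.ball_min_global hKcv hpc (hzK k) hk (hzmin k)⟩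
    · push_neg at hcase
      have hzeq : ∀ k : ℕ, (k:ℝ) + 1 ≤ ‖z k‖ := fun k => le_trans (hrk k) (hcase k)
      have hzB : ∀ k, evalP f (z k) ≤ evalP f xb := fun k => hzmin k xb hxb (hxbr k)
      obtain ⟨u, φ, x, hφ, hu1, hxK, hip, hconv, htend, hevf⟩ := hkey z hzK hzeq hzB
      have hrb : Tendsto (fun j => r (φ j)) atTop atTop :=
        tendsto_atTop_mono (fun j => hzle (φ j)) htend
      obtain ⟨j, hj1, hj2⟩ := (hevf.and (hrb.eventually_gt_atTop ‖x‖)).exists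
      refine ⟨x, EavesAux.ball_min_global hKcv hpc hxK hj2 ?_⟩
      intro y hy hyr
      exact le_trans hj1 (hzmin (φ j) y hy hyr)
  -- Part B: boundedness
  have hbd : IsBounded (solSet K (evalP f)) := by
    by_contra hub
    rw [isBounded_iff_forall_norm_le] at hub
    push_neg at hub
    have hex2 : ∀ k : ℕ, ∃ zz, zz ∈ solSet K (evalP f) ∧ (k:ℝ) + 1 ≤ ‖zz‖ := by
      intro k
      obtain ⟨zz, h1, h2⟩ := hub ((k:ℝ) + 1)
      exact ⟨zz, h1, h2.le⟩
    choose z hzSol hzn using hex2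
    have hzK' : ∀ k, z k ∈ K := fun k => (hzSol k).1
    have hzB : ∀ k, evalP f (z k) ≤ evalP f xb := fun k => (hzSol k).2 xb hxb
    obtain ⟨u, φ, x, hφ, hu1, hxK, hip, hconv, htend, hevf⟩ := hkey z hzK' hzn hzB
    obtain ⟨j₀, hj₀⟩ := hevf.exists
    have hxSol : x ∈ solSet K (evalP f) :=
      ⟨hxK, fun y hy => le_trans hj₀ ((hzSol (φ j₀)).2 y hy)⟩
    have hconst : ∀ t > (0:ℝ), evalP f (x + t • u) = evalP f x := by
      intro s hs
      have hcoef : ∀ᶠ j in atTop, s / ‖z (φ j)‖ ∈ Set.Icc (0:ℝ) 1 := by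
        filter_upwards [htend.eventually_ge_atTop s, htend.eventually_gt_atTop 0] with j h1 h2
        exact ⟨div_nonneg hs.le h2.le, (div_le_one h2).mpr h1⟩
      have hwSol : ∀ᶠ j in atTop,
          x + (s / ‖z (φ j)‖) • (z (φ j) - x) ∈ solSet K (evalP f) := by
        filter_upwards [hcoef] with j hj
        exact EavesAux.segment_sol hKcv hpc hxSol (hzSol (φ j)) hj
      have h2 : Tendsto (fun j => s / ‖z (φ j)‖) atTop (𝓝 0) := by
        have h := htend.inv_tendsto_atTop.const_mul s
        rw [mul_zero] at h
        refine h.congr fun j => ?_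
        simp [div_eq_mul_inv]
      have hwlim : Tendsto (fun j => x + (s / ‖z (φ j)‖) • (z (φ j) - x))
          atTop (𝓝 (x + s • u)) := by
        have h1 : Tendsto (fun j => s • (‖z (φ j)‖⁻¹ • z (φ j))) atTop (𝓝 (s • u)) :=
          hconv.const_smul s
        have h3 : Tendsto (fun j => (s / ‖z (φ j)‖) • x) atTop (𝓝 (0:En n)) := by
          simpa using h2.smul_const x
        have h4 : Tendsto (fun j => x + (s • (‖z (φ j)‖⁻¹ • z (φ j)) - (s / ‖z (φ j)‖) • x))
            atTop (𝓝 (x + (s • u - 0))) := tendsto_const_nhds.add (h1.sub h3)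
        rw [sub_zero] at h4
        refine h4.congr fun j => ?_
        congr 1
        rw [div_eq_mul_inv, smul_sub, ← smul_smul, ← smul_smul]
      have hfval : Tendsto (fun j => evalP f (x + (s / ‖z (φ j)‖) • (z (φ j) - x)))
          atTop (𝓝 (evalP f (x + s • u))) :=
        ((EavesAux.continuous_evalP f).tendsto _).comp hwlim
      have hfc : (fun j => evalP f (x + (s / ‖z (φ j)‖) • (z (φ j) - x))) =ᶠ[atTop]
          (fun _ => evalP f x) := by
        filter_upwards [hwSol] with j hj
        exact le_antisymm (hj.2 x hxK) (hxSol.2 _ hj.1)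
      exact tendsto_nhds_unique (hfval.congr' hfc) tendsto_const_nhds
    have hder := EavesAux.hasDerivAt_evalP_line f x u 0
    rw [zero_smul, add_zero] at hder
    have hzero : ⟪polyGrad f x, u⟫ = 0 := by
      refine EavesAux.right_deriv_zero hder fun t ht => ?_
      show evalP f (x + t • u) = evalP f (x + (0:ℝ) • u)
      rw [zero_smul, add_zero, hconst t ht]
    rw [hzero] at hip
    exact lt_irrefl _ hip
  exact ⟨hne, Metric.isCompact_of_isClosed_isBounded (EavesAux.solSet_closed hKcl f) hbd⟩

end
end

section
/- (Eaves type theorem, necessity) Let K ⊆ ℝ^n be a nonempty closed convex set and f : ℝ^n → ℝ a polynomial of degree d ≥ 1 that is pseudoconvex on K, and suppose OP(K,f) is non-regular (i.e., Sol(K∞, f_d) is unbounded). If Sol(K,f) is nonempty and compact, then for every v ∈ Sol(K∞, f_d) \ {0} there exists x ∈ K with ⟨∇f(x), v⟩ > 0. -/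
open Filter Topology MvPolynomial Bornology
open scoped RealInnerProductSpace Pointwise

noncomputable section

/-- Eaves type theorem (necessity): if `K` is nonempty closed convex, `f` is a pseudoconvex
polynomial of degree `d ≥ 1` on `K`, `OP(K,f)` is non-regular, and `Sol(K,f)` is nonempty and
compact, then for every nonzero `v ∈ Sol(K∞, f_d)` there is `x ∈ K` with `⟨∇f(x), v⟩ > 0`. -/
theorem stmt6 {n d : ℕ} (hd : 1 ≤ d) (K : Set (En n)) (hKne : K.Nonempty) (hKcl : IsClosed K)
    (hKcv : Convex ℝ K) (f : MvPolynomial (Fin n) ℝ) (hdeg : f.totalDegree = d)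
    (hpc : ∀ x ∈ K, ∀ y ∈ K, 0 ≤ ⟪polyGrad f x, y - x⟫ → evalP f x ≤ evalP f y)
    (hnonreg : ¬ IsBounded (solSet (asympCone K) (evalP (homogeneousComponent d f))))
    (hb : (solSet K (evalP f)).Nonempty ∧ IsCompact (solSet K (evalP f))) :
    ∀ v ∈ solSet (asympCone K) (evalP (homogeneousComponent d f)), v ≠ 0 →
      ∃ x ∈ K, 0 < ⟪polyGrad f x, v⟫ := by
  intro v hv hvne
  by_contra hcon
  push_neg at hcon
  -- v is in the asymptotic cone
  obtain ⟨t, x, hxK, ht, hlim⟩ := hv.1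
  -- Step 1: for every p ∈ K and c ≥ 0, p + c • v ∈ K
  have hray : ∀ p ∈ K, ∀ c : ℝ, 0 ≤ c → p + c • v ∈ K := by
    intro p hp c hc
    have hc0 : Tendsto (fun k => c / t k) atTop (𝓝 0) := by
      have := ht.inv_tendsto_atTop.const_mul c
      simpa [div_eq_mul_inv] using this
    have h1 : Tendsto (fun k => (1 - c / t k) • p) atTop (𝓝 p) := by
      have hsub : Tendsto (fun k => (1:ℝ) - c / t k) atTop (𝓝 ((1:ℝ) - 0)) :=
        (tendsto_const_nhds (x := (1:ℝ))).sub hc0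
      have := hsub.smul_const p
      simpa using this
    have h2 : Tendsto (fun k => (c / t k) • x k) atTop (𝓝 (c • v)) := by
      have := hlim.const_smul c
      refine this.congr fun k => ?_
      simp [div_eq_mul_inv, smul_smul]
    have hy : Tendsto (fun k => (1 - c / t k) • p + (c / t k) • x k) atTop (𝓝 (p + c • v)) :=
      h1.add h2
    refine hKcl.mem_of_tendsto hy ?_
    have hev : ∀ᶠ k in atTop, max c 1 ≤ t k := ht.eventually_ge_atTop _
    filter_upwards [hev] with k hk
    have htk : (0:ℝ) < t k := lt_of_lt_of_le (by positivity) (le_trans (le_max_right c 1) hk)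
    have hle : c / t k ≤ 1 := by
      rw [div_le_one htk]; exact le_trans (le_max_left c 1) hk
    have hge : 0 ≤ c / t k := div_nonneg hc htk.le
    exact hKcv hp (hxK k) (by linarith) hge (by ring)
  -- Step 2: the whole ray from a minimizer lies in the solution set
  obtain ⟨⟨xs, hxs⟩, hcmp⟩ := hb
  have hraySol : ∀ c : ℝ, 0 ≤ c → xs + c • v ∈ solSet K (evalP f) := by
    intro c hc
    have hmem : xs + c • v ∈ K := hray xs hxs.1 c hc
    have hinner : ⟪polyGrad f (xs + c • v), v⟫ ≤ 0 := hcon _ hmem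
    have hkey : 0 ≤ ⟪polyGrad f (xs + c • v), xs - (xs + c • v)⟫ := by
      have : xs - (xs + c • v) = -(c • v) := by abel
      rw [this, inner_neg_right, real_inner_smul_right]
      nlinarith
    have hle : evalP f (xs + c • v) ≤ evalP f xs := hpc _ hmem _ hxs.1 hkey
    exact ⟨hmem, fun y hy => le_trans hle (hxs.2 y hy)⟩
  -- Step 3: contradiction with boundedness of the solution set
  have hbd := hcmp.isBounded
  rw [isBounded_iff_forall_norm_le] at hbd
  obtain ⟨C, hC⟩ := hbd
  have hvpos : 0 < ‖v‖ := norm_pos_iff.mpr hvne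
  obtain ⟨k, hk⟩ := exists_nat_gt ((C + ‖xs‖) / ‖v‖)
  have hkk : C + ‖xs‖ < (k : ℝ) * ‖v‖ := by
    rwa [div_lt_iff₀ hvpos] at hk
  have h1 : ‖xs + (k : ℝ) • v‖ ≤ C := hC _ (hraySol k (by positivity))
  have h2 : (k : ℝ) * ‖v‖ ≤ ‖xs + (k : ℝ) • v‖ + ‖xs‖ := by
    have : ‖(k : ℝ) • v‖ ≤ ‖xs + (k : ℝ) • v‖ + ‖xs‖ := by
      calc ‖(k : ℝ) • v‖ = ‖(xs + (k : ℝ) • v) - xs‖ := by congr 1; abel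
        _ ≤ ‖xs + (k : ℝ) • v‖ + ‖xs‖ := norm_sub_le _ _
    simpa [norm_smul] using this
  linarith

end
end

section
/- Let K ⊆ ℝ^n be a nonempty closed convex set and f : ℝ^n → ℝ a polynomial of degree d ≥ 1 that is convex on K, and suppose OP(K,f) is non-regular (i.e., Sol(K∞, f_d) is unbounded). Then Sol(K,f) is nonempty and compact if and only if for every v ∈ Sol(K∞, f_d) \ {0} there exists x ∈ K with ⟨∇f(x), v⟩ > 0. -/
open Filter Topology MvPolynomial Bornology
open scoped RealInnerProductSpace Pointwise

noncomputable section

lemma continuous_evalP {n : ℕ} (f : MvPolynomial (Fin n) ℝ) : Continuous (evalP f) := by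
  induction f using MvPolynomial.induction_on with
  | C a =>
      have : evalP (C a : MvPolynomial (Fin n) ℝ) = fun _ => a := by
        funext x; simp [evalP]
      rw [this]; exact continuous_const
  | add p q hp hq =>
      have : evalP (p + q) = fun x => evalP p x + evalP q x := by
        funext x; simp [evalP]
      rw [this]; exact hp.add hq
  | mul_X p i hp =>
      have hcoord : Continuous fun x : En n => x i := by
        exact (continuous_apply i).comp (PiLp.continuous_ofLp 2 _)
      have : evalP (p * X i) = fun x => evalP p x * x i := by
        funext x; simp [evalP]
      rw [this]; exact hp.mul hcoord

lemma evalP_homog {n : ℕ} {p : MvPolynomial (Fin n) ℝ} {e : ℕ} (hp : p.IsHomogeneous e)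
    (r : ℝ) (x : En n) : evalP p (r • x) = r ^ e * evalP p x := by
  have hcoord : (fun i => (r • x) i) = fun i => r * x i := by
    funext i; simp
  rw [evalP, evalP, hcoord, eval_eq', eval_eq', Finset.mul_sum]
  apply Finset.sum_congr rfl
  intro dm hdm
  have hc : coeff dm p ≠ 0 := (mem_support_iff).mp hdm
  have hdeg : dm.degree = e := by rw [Finsupp.degree_eq_weight_one]; exact hp hc
  have hprod : ∏ i, (r * x i) ^ dm i = r ^ e * ∏ i, x i ^ dm i := by
    rw [← hdeg]
    simp_rw [mul_pow]
    rw [Finset.prod_mul_distrib, Finset.prod_pow_eq_pow_sum]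
    congr 1
    · congr 1
      rw [Finsupp.degree]
      exact (Finset.sum_subset (Finset.subset_univ _) (by
        intro i _ hi
        simpa using (Finsupp.notMem_support_iff.mp hi))).symm
  rw [hprod]; ring

lemma hasDerivAt_evalP {n : ℕ} (f : MvPolynomial (Fin n) ℝ) (x w : En n) :
    HasDerivAt (fun s : ℝ => evalP f (x + s • w))
      (∑ i, w i * MvPolynomial.eval (fun j => x j) (MvPolynomial.pderiv i f)) 0 := by
  induction f using MvPolynomial.induction_on with
  | C a =>
      have h1 : (fun s : ℝ => evalP (C a : MvPolynomial (Fin n) ℝ) (x + s • w)) = fun _ => a := by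
        funext s; simp [evalP]
      have h2 : (∑ i, w i * MvPolynomial.eval (fun j => x j)
          (MvPolynomial.pderiv i (C a : MvPolynomial (Fin n) ℝ))) = 0 := by
        simp
      rw [h1, h2]; exact hasDerivAt_const 0 a
  | add p q hp hq =>
      have h1 : (fun s : ℝ => evalP (p + q) (x + s • w)) =
          fun s => evalP p (x + s • w) + evalP q (x + s • w) := by
        funext s; simp [evalP]
      have h2 : (∑ i, w i * MvPolynomial.eval (fun j => x j) (MvPolynomial.pderiv i (p + q))) =
          (∑ i, w i * MvPolynomial.eval (fun j => x j) (MvPolynomial.pderiv i p)) +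
          (∑ i, w i * MvPolynomial.eval (fun j => x j) (MvPolynomial.pderiv i q)) := by
        rw [← Finset.sum_add_distrib]
        apply Finset.sum_congr rfl
        intro i _; rw [map_add, map_add]; ring
      rw [h1, h2]; exact hp.add hq
  | mul_X p i hp =>
      have hcoord : HasDerivAt (fun s : ℝ => (x + s • w) i) (w i) 0 := by
        have h : (fun s : ℝ => (x + s • w) i) = fun s => x i + w i * s := by
          funext s; simp [mul_comm]
        rw [h]
        simpa using ((hasDerivAt_id (0:ℝ)).const_mul (w i)).const_add (x i)
      have h1 : (fun s : ℝ => evalP (p * X i) (x + s • w)) =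
          fun s => evalP p (x + s • w) * (x + s • w) i := by
        funext s; simp [evalP]
      have key := hp.mul hcoord
      rw [h1]
      convert key using 1
      case e'_4 => rfl
      case e'_5 => rfl
      case e'_8 => rfl
      have hx0 : evalP p (x + (0:ℝ) • w) = MvPolynomial.eval (fun j => x j) p := by
        simp [evalP]
      have hx0' : ((x + (0:ℝ) • w) i) = x i := by simp
      rw [hx0, hx0']
      simp only [pderiv_mul, map_add, map_mul, eval_X, pderiv_X]
      simp only [Pi.single_apply, apply_ite (MvPolynomial.eval fun j => x j), map_one, map_zero,
        mul_ite, mul_one, mul_zero, mul_add, Finset.sum_add_distrib]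
      simp only [Finset.sum_ite_eq, Finset.sum_ite_eq', Finset.mem_univ, if_true]
      rw [Finset.sum_mul]
      congr 1
      · exact Finset.sum_congr rfl fun j _ => by ring
      · ring

lemma grad_ineq {n : ℕ} (f : MvPolynomial (Fin n) ℝ) {K : Set (En n)}
    (hcvx : ConvexOn ℝ K (evalP f)) {x y : En n} (hx : x ∈ K) (hy : y ∈ K) :
    ⟪polyGrad f x, y - x⟫ ≤ evalP f y - evalP f x := by
  set w := y - x with hw
  set D := ∑ i, w i * MvPolynomial.eval (fun j => x j) (MvPolynomial.pderiv i f) with hD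
  have hder : HasDerivAt (fun s : ℝ => evalP f (x + s • w)) D 0 := hasDerivAt_evalP f x w
  have hinner : ⟪polyGrad f x, y - x⟫ = D := by
    rw [hD, ← hw]
    simp [polyGrad, PiLp.inner_apply, RCLike.inner_apply, conj_trivial, mul_comm]
  rw [hinner]
  have hslope : ∀ s ∈ Set.Ioc (0:ℝ) 1,
      slope (fun s : ℝ => evalP f (x + s • w)) 0 s ≤ evalP f y - evalP f x := by
    intro s hs
    have h1 : x + s • w = (1 - s) • x + s • y := by
      rw [hw]; module
    have h2 : evalP f (x + s • w) ≤ (1 - s) * evalP f x + s * evalP f y := by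
      rw [h1]
      exact hcvx.2 hx hy (by linarith [hs.2]) (le_of_lt hs.1) (by ring)
    rw [slope_def_field, sub_zero, div_le_iff₀ hs.1]
    calc evalP f (x + s • w) - evalP f (x + (0:ℝ) • w)
        ≤ (1 - s) * evalP f x + s * evalP f y - evalP f x := by
          simp only [zero_smul, add_zero]; linarith
      _ = (evalP f y - evalP f x) * s := by ring
  have htend : Tendsto (slope (fun s : ℝ => evalP f (x + s • w)) 0) (𝓝[>] (0:ℝ)) (𝓝 D) := by
    have := (hasDerivAt_iff_tendsto_slope).mp hder
    exact this.mono_left (nhdsWithin_mono 0 fun s hs => ne_of_gt hs)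
  refine le_of_tendsto htend ?_
  filter_upwards [Ioc_mem_nhdsGT_of_mem (Set.mem_Ico.mpr ⟨le_refl 0, one_pos⟩)] with s hs
  exact hslope s hs

lemma zero_mem_asympCone {n : ℕ} {K : Set (En n)} (hKne : K.Nonempty) :
    (0 : En n) ∈ asympCone K := by
  obtain ⟨x₀, hx₀⟩ := hKne
  refine ⟨fun k => (k : ℝ) + 1, fun _ => x₀, fun _ => hx₀, ?_, ?_⟩
  · exact tendsto_atTop_add_const_right _ 1 tendsto_natCast_atTop_atTop
  · have h : Tendsto (fun k : ℕ => ((k : ℝ) + 1)⁻¹) atTop (𝓝 0) := by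
      apply Tendsto.comp tendsto_inv_atTop_zero
      exact tendsto_atTop_add_const_right _ 1 tendsto_natCast_atTop_atTop
    simpa using h.smul_const x₀

lemma smul_mem_asympCone {n : ℕ} {K : Set (En n)} {c : ℝ} (hc : 0 < c) {v : En n}
    (hv : v ∈ asympCone K) : c • v ∈ asympCone K := by
  obtain ⟨t, x, hxK, ht, hlim⟩ := hv
  refine ⟨fun k => c⁻¹ * t k, x, hxK, ?_, ?_⟩
  · exact ht.const_mul_atTop (inv_pos.mpr hc)
  · have : (fun k => (c⁻¹ * t k)⁻¹ • x k) = fun k => c • ((t k)⁻¹ • x k) := by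
      funext k; rw [mul_inv, inv_inv, mul_smul]
    rw [this]
    exact hlim.const_smul c

lemma ray_mem_of_asympCone {n : ℕ} {K : Set (En n)} (hKcl : IsClosed K) (hKcv : Convex ℝ K)
    {x : En n} (hx : x ∈ K) {v : En n} (hv : v ∈ asympCone K) {t : ℝ} (ht : 0 ≤ t) :
    x + t • v ∈ K := by
  obtain ⟨s, y, hyK, hs, hlim⟩ := hv
  have hev : ∀ᶠ k in atTop, s k ≥ max t 1 := hs.eventually_ge_atTop _
  have hmem : ∀ᶠ k in atTop, (1 - t * (s k)⁻¹) • x + (t * (s k)⁻¹) • y k ∈ K := by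
    filter_upwards [hev] with k hk
    have hs1 : (1:ℝ) ≤ s k := le_trans (le_max_right _ _) hk
    have hst : t ≤ s k := le_trans (le_max_left _ _) hk
    have hsk0 : (0:ℝ) < s k := lt_of_lt_of_le zero_lt_one hs1
    have hθ0 : 0 ≤ t * (s k)⁻¹ := mul_nonneg ht (le_of_lt (inv_pos.mpr hsk0))
    have hθ1 : t * (s k)⁻¹ ≤ 1 := by
      rw [← div_eq_mul_inv, div_le_one hsk0]; exact hst
    exact hKcv hx (hyK k) (by linarith) hθ0 (by ring)
  have hlim2 : Tendsto (fun k => (1 - t * (s k)⁻¹) • x + (t * (s k)⁻¹) • y k) atTop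
      (𝓝 (x + t • v)) := by
    have hinv : Tendsto (fun k => (s k)⁻¹) atTop (𝓝 0) :=
      Tendsto.comp tendsto_inv_atTop_zero hs
    have h1 : Tendsto (fun k => (1 - t * (s k)⁻¹ : ℝ)) atTop (𝓝 1) := by
      have := (hinv.const_mul t)
      simpa using (tendsto_const_nhds (x := (1:ℝ))).sub this
    have h2 : Tendsto (fun k => (t * (s k)⁻¹) • y k) atTop (𝓝 (t • v)) := by
      have : (fun k => (t * (s k)⁻¹) • y k) = fun k => t • ((s k)⁻¹ • y k) := by
        funext k; rw [mul_smul]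
      rw [this]
      exact hlim.const_smul t
    have := (h1.smul_const x).add h2
    simpa using this
  exact hKcl.mem_of_tendsto hlim2 hmem

lemma hc_eval_smul {n d : ℕ} (f : MvPolynomial (Fin n) ℝ) (e : ℕ) (r : ℝ) (x : En n) :
    evalP (homogeneousComponent e f) (r • x) = r ^ e * evalP (homogeneousComponent e f) x :=
  evalP_homog (homogeneousComponent_isHomogeneous e f) r x

lemma hc_eval_zero {n : ℕ} (f : MvPolynomial (Fin n) ℝ) {e : ℕ} (he : 1 ≤ e) :
    evalP (homogeneousComponent e f) (0 : En n) = 0 := by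
  have h := evalP_homog (homogeneousComponent_isHomogeneous e f) 0 (0 : En n)
  rw [smul_zero] at h
  rw [h, zero_pow (by omega), zero_mul]

lemma evalP_sum_hc {n d : ℕ} (f : MvPolynomial (Fin n) ℝ) (hdeg : f.totalDegree = d) (x : En n) :
    evalP f x = ∑ e ∈ Finset.range (d + 1), evalP (homogeneousComponent e f) x := by
  conv_lhs => rw [evalP, ← sum_homogeneousComponent f, hdeg]
  rw [map_sum]
  rfl

/-- For `K` nonempty closed convex, `f` a polynomial of degree `d ≥ 1` convex on `K`, and
`OP(K,f)` non-regular: `Sol(K,f)` is nonempty and compact iff for every nonzero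
`v ∈ Sol(K∞, f_d)` there exists `x ∈ K` with `⟨∇f(x), v⟩ > 0`. -/
theorem stmt7 {n d : ℕ} (hd : 1 ≤ d) (K : Set (En n)) (hKne : K.Nonempty) (hKcl : IsClosed K)
    (hKcv : Convex ℝ K) (f : MvPolynomial (Fin n) ℝ) (hdeg : f.totalDegree = d)
    (hcvx : ConvexOn ℝ K (evalP f))
    (hnonreg : ¬ IsBounded (solSet (asympCone K) (evalP (homogeneousComponent d f)))) :
    ((solSet K (evalP f)).Nonempty ∧ IsCompact (solSet K (evalP f))) ↔
    (∀ v ∈ solSet (asympCone K) (evalP (homogeneousComponent d f)), v ≠ 0 →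
      ∃ x ∈ K, 0 < ⟪polyGrad f x, v⟫) := by
  set F := evalP f with hF
  set Gd := evalP (homogeneousComponent d f) with hGd
  -- S is nonempty
  have hSne : (solSet (asympCone K) Gd).Nonempty := by
    rw [Set.nonempty_iff_ne_empty]
    intro h
    exact hnonreg (by rw [h]; exact Bornology.isBounded_empty)
  obtain ⟨v₀, hv₀C, hv₀m⟩ := hSne
  have hGd0 : Gd (0 : En n) = 0 := hc_eval_zero f hd
  have hv₀0 : Gd v₀ = 0 := by
    have h1 : Gd v₀ ≤ 0 := by simpa [hGd0] using hv₀m 0 (zero_mem_asympCone hKne)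
    have h2 : Gd v₀ ≤ Gd ((2:ℝ) • v₀) := hv₀m _ (smul_mem_asympCone two_pos hv₀C)
    rw [hGd, hc_eval_smul (d := d) f d 2 v₀, ← hGd] at h2
    have h3 : (2:ℝ) ≤ 2 ^ d := by
      calc (2:ℝ) = 2 ^ 1 := (pow_one 2).symm
      _ ≤ 2 ^ d := pow_le_pow_right₀ one_le_two hd
    nlinarith
  have hGnonneg : ∀ w ∈ asympCone K, 0 ≤ Gd w := fun w hw => hv₀0 ▸ hv₀m w hw
  have hSmem : ∀ v : En n, v ∈ solSet (asympCone K) Gd ↔ v ∈ asympCone K ∧ Gd v = 0 := by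
    intro v
    constructor
    · rintro ⟨hvC, hvm⟩
      refine ⟨hvC, le_antisymm ?_ (hGnonneg v hvC)⟩
      simpa [hGd0] using hvm 0 (zero_mem_asympCone hKne)
    · rintro ⟨hvC, hv0⟩
      exact ⟨hvC, fun y hy => hv0 ▸ hGnonneg y hy⟩
  constructor
  · -- forward direction
    rintro ⟨⟨xs, hxsK, hxsm⟩, hcomp⟩ v hvS hvne
    by_contra hcon
    push_neg at hcon
    have hvC : v ∈ asympCone K := hvS.1
    have hray : ∀ t : ℝ, 0 ≤ t → xs + t • v ∈ solSet K F := by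
      intro t ht
      have hmem : xs + t • v ∈ K := ray_mem_of_asympCone hKcl hKcv hxsK hvC ht
      have hgi := grad_ineq f hcvx hmem hxsK
      have hgv := hcon _ hmem
      have hinner : ⟪polyGrad f (xs + t • v), xs - (xs + t • v)⟫ =
          -t * ⟪polyGrad f (xs + t • v), v⟫ := by
        have : xs - (xs + t • v) = (-t) • v := by module
        rw [this, real_inner_smul_right]
      have hle : F (xs + t • v) ≤ F xs := by
        rw [hinner] at hgi
        nlinarith
      have heq : F (xs + t • v) = F xs := le_antisymm hle (hxsm _ hmem)
      exact ⟨hmem, fun y hy => heq ▸ hxsm y hy⟩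
    obtain ⟨R, hR⟩ := isBounded_iff_forall_norm_le.mp hcomp.isBounded
    have hvpos : (0:ℝ) < ‖v‖ := norm_pos_iff.mpr hvne
    have hR0 : 0 ≤ R := le_trans (norm_nonneg xs) (hR xs ⟨hxsK, hxsm⟩)
    set t := (R + ‖xs‖ + 1) / ‖v‖ with htdef
    have ht : 0 ≤ t := div_nonneg (by positivity) (le_of_lt hvpos)
    have hnorm := hR _ (hray t ht)
    have htv : ‖t • v‖ = R + ‖xs‖ + 1 := by
      rw [norm_smul, Real.norm_eq_abs, abs_of_nonneg ht, htdef, div_mul_cancel₀]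
      exact ne_of_gt hvpos
    have hsub : ‖t • v‖ ≤ ‖xs + t • v‖ + ‖xs‖ := by
      simpa using norm_sub_le (xs + t • v) xs
    rw [htv] at hsub
    linarith
  · -- reverse direction
    intro hcond
    obtain ⟨x₀, hx₀⟩ := hKne
    set c := F x₀ with hc
    set L := {x ∈ K | F x ≤ c} with hL
    have hFcont : Continuous F := continuous_evalP f
    have hLcl : IsClosed L := hKcl.inter (isClosed_le hFcont continuous_const)
    have hLne : L.Nonempty := ⟨x₀, hx₀, le_refl c⟩
    have hLbd : IsBounded L := by
      by_contra hLbd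
      have hseq : ∀ k : ℕ, ∃ y ∈ L, (k : ℝ) + 1 ≤ ‖y‖ := by
        intro k
        by_contra hcontra
        push_neg at hcontra
        exact hLbd (isBounded_iff_forall_norm_le.mpr ⟨(k : ℝ) + 1, fun y hy =>
          le_of_lt (hcontra y hy)⟩)
      choose y hyL hynorm using hseq
      have hypos : ∀ k, (0:ℝ) < ‖y k‖ := fun k =>
        lt_of_lt_of_le (by positivity) (hynorm k)
      set u : ℕ → En n := fun k => ‖y k‖⁻¹ • y k with hu
      have husph : ∀ k, u k ∈ Metric.sphere (0 : En n) 1 := by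
        intro k
        simp only [Metric.mem_sphere, dist_zero_right, hu, norm_smul, Real.norm_eq_abs,
          abs_of_nonneg (inv_nonneg.mpr (le_of_lt (hypos k)))]
        rw [inv_mul_cancel₀ (ne_of_gt (hypos k))]
      obtain ⟨v, hvsph, φ, hφmono, hφlim⟩ :=
        (isCompact_sphere (0 : En n) 1).tendsto_subseq husph
      set r : ℕ → ℝ := fun k => ‖y (φ k)‖ with hr
      have hrpos : ∀ k, (0:ℝ) < r k := fun k => hypos (φ k)
      have hrtop : Tendsto r atTop atTop := by
        apply tendsto_atTop_mono (fun k => le_trans ?_ (hynorm (φ k)))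
        · exact tendsto_atTop_add_const_right _ 1 tendsto_natCast_atTop_atTop
        · exact_mod_cast add_le_add_left (Nat.cast_le.mpr (hφmono.le_apply)) 1
      have hrinv : Tendsto (fun k => (r k)⁻¹) atTop (𝓝 0) :=
        Tendsto.comp tendsto_inv_atTop_zero hrtop
      have hvC : v ∈ asympCone K := by
        refine ⟨r, fun k => y (φ k), fun k => (hyL (φ k)).1, hrtop, ?_⟩
        exact hφlim
      -- Gd v ≤ 0
      have hydecomp : ∀ k, y (φ k) = r k • u (φ k) := by
        intro k
        rw [hu, hr, smul_smul, mul_inv_cancel₀ (ne_of_gt (hypos (φ k))), one_smul]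
      have hGdle : Gd v ≤ 0 := by
        have hAeq : ∀ k, ((r k)⁻¹) ^ d * F (y (φ k)) =
            ∑ e ∈ Finset.range (d + 1),
              ((r k)⁻¹) ^ (d - e) * evalP (homogeneousComponent e f) (u (φ k)) := by
          intro k
          rw [hydecomp k, hF, evalP_sum_hc f hdeg, Finset.mul_sum]
          apply Finset.sum_congr rfl
          intro e he
          rw [hc_eval_smul (d := d) f e (r k) (u (φ k))]
          have hed : e ≤ d := Nat.lt_succ_iff.mp (Finset.mem_range.mp he)
          have hkey : ((r k)⁻¹) ^ d = ((r k)⁻¹) ^ (d - e) * ((r k)⁻¹) ^ e := by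
            rw [← pow_add, Nat.sub_add_cancel hed]
          have h1 : ((r k)⁻¹) ^ e * (r k) ^ e = 1 := by
            rw [← mul_pow, inv_mul_cancel₀ (ne_of_gt (hrpos k)), one_pow]
          calc ((r k)⁻¹) ^ d * ((r k) ^ e * evalP (homogeneousComponent e f) (u (φ k)))
              = (((r k)⁻¹) ^ (d - e)) * ((((r k)⁻¹) ^ e * (r k) ^ e) *
                evalP (homogeneousComponent e f) (u (φ k))) := by rw [hkey]; ring
            _ = ((r k)⁻¹) ^ (d - e) * evalP (homogeneousComponent e f) (u (φ k)) := by
                rw [h1, one_mul]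
        have hlimA : Tendsto (fun k => ((r k)⁻¹) ^ d * F (y (φ k))) atTop (𝓝 (Gd v)) := by
          have h1 : Tendsto (fun k => ∑ e ∈ Finset.range (d + 1),
              ((r k)⁻¹) ^ (d - e) * evalP (homogeneousComponent e f) (u (φ k))) atTop
              (𝓝 (∑ e ∈ Finset.range (d + 1),
                if e = d then Gd v else 0)) := by
            apply tendsto_finset_sum
            intro e he
            have hGe : Tendsto (fun k => evalP (homogeneousComponent e f) (u (φ k))) atTop
                (𝓝 (evalP (homogeneousComponent e f) v)) :=
              ((continuous_evalP (homogeneousComponent e f)).tendsto v).comp hφlim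
            by_cases hed : e = d
            · subst hed
              simp only [Nat.sub_self, pow_zero, one_mul, if_true]
              exact hGe
            · simp only [hed, if_false]
              have hde : d - e ≠ 0 := by
                have : e < d := lt_of_le_of_ne (Nat.lt_succ_iff.mp (Finset.mem_range.mp he)) hed
                omega
              have hp : Tendsto (fun k => ((r k)⁻¹) ^ (d - e)) atTop (𝓝 0) := by
                have := hrinv.pow (d - e)
                rwa [zero_pow hde] at this
              have := hp.mul hGe
              rwa [zero_mul] at this
          rw [Finset.sum_ite_eq' (Finset.range (d+1)) d (fun _ => Gd v)] at h1
          simp only [Finset.mem_range, Nat.lt_succ_iff, le_refl, if_true] at h1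
          have : (fun k => ((r k)⁻¹) ^ d * F (y (φ k))) = fun k =>
              ∑ e ∈ Finset.range (d + 1),
                ((r k)⁻¹) ^ (d - e) * evalP (homogeneousComponent e f) (u (φ k)) := by
            funext k; exact hAeq k
          rw [this]
          exact h1
        have hlimB : Tendsto (fun k => ((r k)⁻¹) ^ d * c) atTop (𝓝 0) := by
          have := (hrinv.pow d).mul_const c
          rwa [zero_pow (by omega), zero_mul] at this
        refine le_of_tendsto_of_tendsto' hlimA hlimB ?_
        intro k
        apply mul_le_mul_of_nonneg_left (hyL (φ k)).2
        positivity
      have hvS : v ∈ solSet (asympCone K) Gd :=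
        (hSmem v).mpr ⟨hvC, le_antisymm hGdle (hGnonneg v hvC)⟩
      have hvne : v ≠ 0 := by
        intro h
        rw [h] at hvsph
        simp at hvsph
      obtain ⟨x, hxK, hgv⟩ := hcond v hvS hvne
      -- contradiction via gradient inequality
      set g := polyGrad f x with hg
      set M := c - F x + ⟪g, x⟫ with hM
      have hbound : ∀ k, ⟪g, u (φ k)⟫ ≤ (r k)⁻¹ * M := by
        intro k
        have hgi := grad_ineq f hcvx hxK (hyL (φ k)).1
        have h1 : ⟪g, y (φ k)⟫ ≤ M := by
          rw [inner_sub_right] at hgi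
          have := (hyL (φ k)).2
          rw [hM]
          linarith
        have h2 : ⟪g, u (φ k)⟫ = (r k)⁻¹ * ⟪g, y (φ k)⟫ := by
          rw [hu, hr, real_inner_smul_right]
        rw [h2]
        exact mul_le_mul_of_nonneg_left h1 (le_of_lt (inv_pos.mpr (hrpos k)))
      have hlim1 : Tendsto (fun k => ⟪g, u (φ k)⟫) atTop (𝓝 ⟪g, v⟫) :=
        ((continuous_const.inner continuous_id).tendsto v).comp hφlim
      have hlim2 : Tendsto (fun k => (r k)⁻¹ * M) atTop (𝓝 0) := by
        have := hrinv.mul_const M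
        rwa [zero_mul] at this
      have : ⟪g, v⟫ ≤ 0 := le_of_tendsto_of_tendsto' hlim1 hlim2 hbound
      linarith
    have hLcomp : IsCompact L := Metric.isCompact_of_isClosed_isBounded hLcl hLbd
    obtain ⟨xs, hxsL, hxsmin⟩ := hLcomp.exists_isMinOn hLne hFcont.continuousOn
    have hxsK : xs ∈ K := hxsL.1
    have hglobal : ∀ y ∈ K, F xs ≤ F y := by
      intro y hy
      by_cases hyc : F y ≤ c
      · exact hxsmin ⟨hy, hyc⟩
      · push_neg at hyc
        exact le_trans (hxsmin ⟨hx₀, le_refl c⟩) (le_of_lt hyc)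
    refine ⟨⟨xs, hxsK, hglobal⟩, ?_⟩
    have hSolcl : IsClosed (solSet K F) := by
      have : solSet K F = K ∩ ⋂ y ∈ K, {x | F x ≤ F y} := by
        ext z
        simp [solSet, Set.mem_iInter]
      rw [this]
      exact hKcl.inter (isClosed_biInter fun y _ => isClosed_le hFcont continuous_const)
    have hSolsub : solSet K F ⊆ L := by
      rintro z ⟨hzK, hzm⟩
      exact ⟨hzK, hzm x₀ hx₀⟩
    exact Metric.isCompact_of_isClosed_isBounded hSolcl (hLbd.subset hSolsub)

end
end

section
/- Let K = {x ∈ ℝ^n : p_i(x) = 0, i = 1,…,l, q_j(x) ≤ 0, j = 1,…,m} be nonempty and convex, where all p_i, q_j are polynomials, let f be a polynomial of degree d ≥ 1 with Sol(K,f) nonempty, and suppose OP(K,f) is regular (Sol(K∞, f_d) is bounded). Then the optimal value function φ(g) = inf{g(x) : x ∈ K} is locally Lipschitz continuous at f: there exist ε > 0 and L > 0 such that |φ(g) − φ(f)| ≤ L‖g − f‖ for all g ∈ P_d with ‖g − f‖ < ε. -/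
open Filter Topology MvPolynomial Bornology
open scoped RealInnerProductSpace Pointwise

noncomputable section

section AuxLemmas

variable {n d : ℕ}

/-- The finite set of exponents of degree at most `d`. -/
def Aset (n d : ℕ) : Finset (Fin n →₀ ℕ) :=
  (Finset.Iic (Finsupp.equivFunOnFinite.symm fun _ => d)).filter fun α => α.degree ≤ d

lemma degree_le_of_mem_Aset {α : Fin n →₀ ℕ} (h : α ∈ Aset n d) : α.degree ≤ d :=
  (Finset.mem_filter.mp h).2

lemma sum_univ_eq_degree (α : Fin n →₀ ℕ) : ∑ i, α i = α.degree := by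
  rw [Finsupp.degree]
  exact (Finset.sum_subset (Finset.subset_univ _)
    (fun i _ hi => Finsupp.notMem_support_iff.mp hi)).symm

lemma degree_eq_sum (α : Fin n →₀ ℕ) : α.degree = α.sum fun _ e => e := rfl

lemma support_subset_Aset (p : MvPolynomial (Fin n) ℝ) (h : p.totalDegree ≤ d) :
    p.support ⊆ Aset n d := by
  intro α hα
  have hdeg : α.degree ≤ d := by
    rw [degree_eq_sum]
    exact (MvPolynomial.le_totalDegree hα).trans h
  refine Finset.mem_filter.mpr ⟨Finset.mem_Iic.mpr ?_, hdeg⟩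
  rw [Finsupp.le_def]
  intro i
  have h1 : α i ≤ α.degree := by
    by_cases hi : i ∈ α.support
    · rw [Finsupp.degree]
      exact Finset.single_le_sum (fun j _ => Nat.zero_le _) hi
    · simp [Finsupp.notMem_support_iff.mp hi]
  simpa using h1.trans hdeg

lemma evalP_eq_sum (p : MvPolynomial (Fin n) ℝ) (h : p.support ⊆ Aset n d) (x : En n) :
    evalP p x = ∑ α ∈ Aset n d, MvPolynomial.coeff α p * ∏ i, x i ^ α i := by
  rw [evalP, MvPolynomial.eval_eq']
  exact Finset.sum_subset h fun α _ hα => by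
    rw [MvPolynomial.notMem_support_iff.mp hα, zero_mul]

lemma l2Norm_nonneg (p : MvPolynomial (Fin n) ℝ) : 0 ≤ l2Norm p := Real.sqrt_nonneg _

lemma abs_coeff_le_l2Norm (p : MvPolynomial (Fin n) ℝ) (α : Fin n →₀ ℕ) :
    |MvPolynomial.coeff α p| ≤ l2Norm p := by
  by_cases h : α ∈ p.support
  · rw [← Real.sqrt_sq_eq_abs]
    exact Real.sqrt_le_sqrt (Finset.single_le_sum (f := fun β => MvPolynomial.coeff β p ^ 2) (fun β _ => sq_nonneg _) h)
  · rw [MvPolynomial.notMem_support_iff.mp h, abs_zero]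
    exact l2Norm_nonneg p

lemma abs_coord_le_norm (x : En n) (i : Fin n) : |x i| ≤ ‖x‖ := by
  rw [EuclideanSpace.norm_eq, ← Real.sqrt_sq_eq_abs]
  refine Real.sqrt_le_sqrt ?_
  have : x i ^ 2 = ‖x i‖ ^ 2 := by rw [Real.norm_eq_abs, sq_abs]
  rw [this]
  exact Finset.single_le_sum (fun j _ => sq_nonneg ‖x j‖) (Finset.mem_univ i)

lemma abs_evalP_le {p : MvPolynomial (Fin n) ℝ} (hp : p.support ⊆ Aset n d) {x : En n} {R : ℝ}
    (hR : 1 ≤ R) (hx : ‖x‖ ≤ R) :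
    |evalP p x| ≤ (Aset n d).card * R ^ d * l2Norm p := by
  rw [evalP_eq_sum p hp x]
  have hterm : ∀ α ∈ Aset n d, |MvPolynomial.coeff α p * ∏ i, x i ^ α i| ≤ R ^ d * l2Norm p := by
    intro α hα
    rw [abs_mul]
    have h1 : |∏ i, x i ^ α i| ≤ R ^ d := by
      rw [Finset.abs_prod]
      calc ∏ i, |x i ^ α i| = ∏ i, |x i| ^ α i := by simp [abs_pow]
        _ ≤ ∏ i, R ^ α i :=
            Finset.prod_le_prod (fun i _ => pow_nonneg (abs_nonneg _) _)
              (fun i _ => pow_le_pow_left₀ (abs_nonneg _) ((abs_coord_le_norm x i).trans hx) _)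
        _ = R ^ (∑ i, α i) := Finset.prod_pow_eq_pow_sum _ _ _
        _ ≤ R ^ d := pow_le_pow_right₀ hR (by rw [sum_univ_eq_degree]; exact degree_le_of_mem_Aset hα)
    calc |MvPolynomial.coeff α p| * |∏ i, x i ^ α i| ≤ l2Norm p * R ^ d :=
          mul_le_mul (abs_coeff_le_l2Norm p α) h1 (abs_nonneg _) (l2Norm_nonneg p)
      _ = R ^ d * l2Norm p := mul_comm _ _
  calc |∑ α ∈ Aset n d, MvPolynomial.coeff α p * ∏ i, x i ^ α i|
      ≤ ∑ α ∈ Aset n d, |MvPolynomial.coeff α p * ∏ i, x i ^ α i| :=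
        Finset.abs_sum_le_sum_abs _ _
    _ ≤ ∑ _α ∈ Aset n d, R ^ d * l2Norm p := Finset.sum_le_sum hterm
    _ = (Aset n d).card * R ^ d * l2Norm p := by
        rw [Finset.sum_const, nsmul_eq_mul, mul_assoc]

lemma evalP_continuous (p : MvPolynomial (Fin n) ℝ) : Continuous (evalP p) := by
  have h : evalP p = fun x : En n => ∑ α ∈ p.support, MvPolynomial.coeff α p * ∏ i, x i ^ α i := by
    funext x
    exact MvPolynomial.eval_eq' _ _
  rw [h]
  refine continuous_finset_sum _ fun α _ => Continuous.mul continuous_const ?_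
  refine continuous_finset_prod _ fun i _ => ?_
  exact ((EuclideanSpace.proj (𝕜 := ℝ) i).continuous.pow _)

end AuxLemmas

section TendstoLemmas

variable {n d : ℕ}

lemma support_hc_subset_Aset {G : MvPolynomial (Fin n) ℝ} (hG : G.support ⊆ Aset n d) :
    (MvPolynomial.homogeneousComponent d G).support ⊆ Aset n d := by
  intro α hα
  have h0 := MvPolynomial.mem_support_iff.mp hα
  rw [MvPolynomial.coeff_homogeneousComponent] at h0
  by_cases hdeg : α.degree = d
  · rw [if_pos hdeg] at h0
    exact hG (MvPolynomial.mem_support_iff.mpr h0)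
  · rw [if_neg hdeg] at h0
    exact absurd rfl h0

lemma evalP_hc_smul (f : MvPolynomial (Fin n) ℝ) (c : ℝ) (v : En n) :
    evalP (MvPolynomial.homogeneousComponent d f) (c • v)
      = c ^ d * evalP (MvPolynomial.homogeneousComponent d f) v := by
  rw [evalP, evalP, MvPolynomial.eval_eq', MvPolynomial.eval_eq', Finset.mul_sum]
  refine Finset.sum_congr rfl fun α hα => ?_
  have h0 := MvPolynomial.mem_support_iff.mp hα
  rw [MvPolynomial.coeff_homogeneousComponent] at h0
  have hdeg : α.degree = d := by
    by_contra hne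
    rw [if_neg hne] at h0
    exact h0 rfl
  have hsm : ∀ i : Fin n, (c • v) i = c * v i := fun i => rfl
  calc MvPolynomial.coeff α (MvPolynomial.homogeneousComponent d f) * ∏ i, (c • v) i ^ α i
      = MvPolynomial.coeff α (MvPolynomial.homogeneousComponent d f)
          * ((∏ i, c ^ α i) * ∏ i, v i ^ α i) := by
        rw [← Finset.prod_mul_distrib]
        simp [hsm, mul_pow]
    _ = c ^ d * (MvPolynomial.coeff α (MvPolynomial.homogeneousComponent d f) * ∏ i, v i ^ α i) := by
        rw [Finset.prod_pow_eq_pow_sum, sum_univ_eq_degree, hdeg]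
        ring

lemma tendsto_eval_div_pow (g : ℕ → MvPolynomial (Fin n) ℝ) (G : MvPolynomial (Fin n) ℝ)
    (hg : ∀ k, (g k).support ⊆ Aset n d) (hG : G.support ⊆ Aset n d)
    (hcoef : ∀ α, Tendsto (fun k => MvPolynomial.coeff α (g k)) atTop (𝓝 (MvPolynomial.coeff α G)))
    (t : ℕ → ℝ) (ht : Tendsto t atTop atTop) (y : ℕ → En n) (v : En n)
    (hy : Tendsto (fun k => (t k)⁻¹ • y k) atTop (𝓝 v)) :
    Tendsto (fun k => evalP (g k) (y k) / t k ^ d) atTop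
      (𝓝 (evalP (MvPolynomial.homogeneousComponent d G) v)) := by
  have hcoord : ∀ i : Fin n, Tendsto (fun k => ((t k)⁻¹ • y k) i) atTop (𝓝 (v i)) := by
    intro i
    have h := ((EuclideanSpace.proj (𝕜 := ℝ) (ι := Fin n) i).continuous.tendsto v).comp hy
    simpa [Function.comp_def] using h
  have hterm : ∀ α ∈ Aset n d,
      Tendsto (fun k => MvPolynomial.coeff α (g k) * (t k)⁻¹ ^ (d - α.degree)
          * ∏ i, ((t k)⁻¹ • y k) i ^ α i) atTop
        (𝓝 (MvPolynomial.coeff α (MvPolynomial.homogeneousComponent d G) * ∏ i, v i ^ α i)) := by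
    intro α hα
    have hprod : Tendsto (fun k => ∏ i, ((t k)⁻¹ • y k) i ^ α i) atTop (𝓝 (∏ i, v i ^ α i)) :=
      tendsto_finset_prod _ fun i _ => (hcoord i).pow _
    have hinv : Tendsto (fun k => (t k)⁻¹ ^ (d - α.degree)) atTop
        (𝓝 ((0 : ℝ) ^ (d - α.degree))) := ht.inv_tendsto_atTop.pow _
    have hlim := ((hcoef α).mul hinv).mul hprod
    have hco : MvPolynomial.coeff α (MvPolynomial.homogeneousComponent d G)
        = MvPolynomial.coeff α G * (0 : ℝ) ^ (d - α.degree) := by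
      rw [MvPolynomial.coeff_homogeneousComponent]
      by_cases h : α.degree = d
      · rw [if_pos h, h, Nat.sub_self, pow_zero, mul_one]
      · have hlt : α.degree < d := lt_of_le_of_ne (degree_le_of_mem_Aset hα) h
        rw [if_neg h, zero_pow (by omega), mul_zero]
    rw [hco]
    exact hlim
  have hsum := tendsto_finset_sum (Aset n d) hterm
  rw [evalP_eq_sum _ (support_hc_subset_Aset hG)]
  refine hsum.congr' ?_
  filter_upwards [ht.eventually_gt_atTop 0] with k hk
  rw [evalP_eq_sum _ (hg k), Finset.sum_div]
  refine Finset.sum_congr rfl fun α hα => ?_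
  have hkne : t k ≠ 0 := hk.ne'
  have hdle : α.degree ≤ d := degree_le_of_mem_Aset hα
  have hyk : ∀ i : Fin n, y k i = t k * (((t k)⁻¹ • y k) i) := by
    intro i
    show y k i = t k * ((t k)⁻¹ * y k i)
    field_simp
  have hprod : ∏ i, (y k) i ^ α i = t k ^ α.degree * ∏ i, ((t k)⁻¹ • y k) i ^ α i := by
    calc ∏ i, (y k) i ^ α i = ∏ i, (t k * (((t k)⁻¹ • y k) i)) ^ α i := by
          refine Finset.prod_congr rfl fun i _ => ?_
          rw [← hyk i]
      _ = (∏ i, t k ^ α i) * ∏ i, ((t k)⁻¹ • y k) i ^ α i := by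
          rw [← Finset.prod_mul_distrib]
          simp [mul_pow]
      _ = t k ^ α.degree * ∏ i, ((t k)⁻¹ • y k) i ^ α i := by
          rw [Finset.prod_pow_eq_pow_sum, sum_univ_eq_degree]
  rw [hprod]
  have hd' : d = α.degree + (d - α.degree) := (Nat.add_sub_cancel' hdle).symm
  rw [hd', pow_add]
  have h1 : t k ^ α.degree ≠ 0 := pow_ne_zero _ hkne
  have h2 : t k ^ (d - α.degree) ≠ 0 := pow_ne_zero _ hkne
  field_simp
  have h3 : t k ^ (d - α.degree) * (t k)⁻¹ ^ (d - α.degree) = 1 := by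
    rw [← mul_pow, mul_inv_cancel₀ hkne, one_pow]
  rw [Nat.add_sub_cancel_left]
  linear_combination (MvPolynomial.coeff α (g k) * ∏ x, ((1 / t k) • y k) x ^ α x) * h3

end TendstoLemmas

lemma div_le_div_of_nonneg_right' {a b c : ℝ} (h : a ≤ b) (hc : 0 < c) : a / c ≤ b / c := by
  gcongr

lemma core_claim {n d : ℕ} (hd : 1 ≤ d) (K : Set (En n)) (f : MvPolynomial (Fin n) ℝ)
    (hdeg : f.totalDegree ≤ d) (xs : En n) (hxsK : xs ∈ K)
    (hmin : ∀ y ∈ K, evalP f xs ≤ evalP f y)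
    (hreg : Bornology.IsBounded (solSet (asympCone K)
      (evalP (MvPolynomial.homogeneousComponent d f)))) :
    ∃ R : ℝ, ∃ ε > (0 : ℝ), ∀ g : MvPolynomial (Fin n) ℝ, g.totalDegree ≤ d →
      l2Norm (g - f) < ε → ∀ x ∈ K, R ≤ ‖x‖ → evalP g xs ≤ evalP g x := by
  have hd0 : d ≠ 0 := by omega
  have hsuppf : f.support ⊆ Aset n d := support_subset_Aset f hdeg
  by_contra hcon
  push_neg at hcon
  have H : ∀ k : ℕ, ∃ g : MvPolynomial (Fin n) ℝ, ∃ x : En n,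
      g.totalDegree ≤ d ∧ l2Norm (g - f) < 1 / ((k : ℝ) + 1) ∧ x ∈ K ∧
      ((k : ℝ) + 1 ≤ ‖x‖) ∧ evalP g x < evalP g xs := by
    intro k
    obtain ⟨g, hg1, hg2, x, hx1, hx2, hx3⟩ := hcon ((k : ℝ) + 1) (1 / ((k : ℝ) + 1)) (by positivity)
    exact ⟨g, x, hg1, hg2, hx1, hx2, hx3⟩
  choose g x hgdeg hgl2 hxK hxnorm hlt using H
  -- coefficient convergence
  have hcoefs : ∀ α, Tendsto (fun k => MvPolynomial.coeff α (g k)) atTop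
      (𝓝 (MvPolynomial.coeff α f)) := by
    intro α
    rw [tendsto_iff_dist_tendsto_zero]
    refine squeeze_zero (fun k => dist_nonneg) (fun k => ?_)
      tendsto_one_div_add_atTop_nhds_zero_nat
    rw [Real.dist_eq]
    have h : MvPolynomial.coeff α (g k) - MvPolynomial.coeff α f
        = MvPolynomial.coeff α (g k - f) := by rw [MvPolynomial.coeff_sub]
    rw [h]
    exact (abs_coeff_le_l2Norm _ _).trans (hgl2 k).le
  set t : ℕ → ℝ := fun k => ‖x k‖ with ht_def
  have ht : Tendsto t atTop atTop := by
    refine tendsto_atTop_mono hxnorm ?_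
    exact tendsto_atTop_add_const_right _ 1 tendsto_natCast_atTop_atTop
  have htpos : ∀ k, 0 < t k := fun k => lt_of_lt_of_le (by positivity) (hxnorm k)
  have hsph : ∀ k, (t k)⁻¹ • x k ∈ Metric.sphere (0 : En n) 1 := by
    intro k
    rw [mem_sphere_zero_iff_norm, norm_smul, norm_inv, Real.norm_eq_abs,
      abs_of_pos (htpos k)]
    exact inv_mul_cancel₀ (htpos k).ne'
  obtain ⟨v, hvmem, φ, hφmono, hφconv⟩ :=
    (isCompact_sphere (0 : En n) 1).tendsto_subseq hsph
  have hv1 : ‖v‖ = 1 := mem_sphere_zero_iff_norm.mp hvmem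
  have hφtop : Tendsto φ atTop atTop := hφmono.tendsto_atTop
  have hφconv' : Tendsto (fun k => (t (φ k))⁻¹ • x (φ k)) atTop (𝓝 v) := hφconv
  have hvK : v ∈ asympCone K := ⟨t ∘ φ, x ∘ φ, fun k => hxK _, ht.comp hφtop, hφconv'⟩
  -- f_d is nonnegative on the asymptotic cone
  have hnn : ∀ w ∈ asympCone K, 0 ≤ evalP (MvPolynomial.homogeneousComponent d f) w := by
    rintro w ⟨s, y, hyK, hs, hyw⟩
    have h1 := tendsto_eval_div_pow (fun _ => f) f (fun _ => hsuppf) hsuppf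
      (fun α => tendsto_const_nhds) s hs y w hyw
    have hsd : Tendsto (fun k => s k ^ d) atTop atTop :=
      (tendsto_pow_atTop hd0).comp hs
    have h2 : Tendsto (fun k => evalP f xs / s k ^ d) atTop (𝓝 0) :=
      tendsto_const_nhds.div_atTop hsd
    refine le_of_tendsto_of_tendsto h2 h1 ?_
    filter_upwards [hsd.eventually_gt_atTop 0] with k hk
    have := hmin _ (hyK k)
    exact div_le_div_of_nonneg_right' this hk
  -- f_d(v) ≤ 0
  have htd : Tendsto (fun k => t (φ k) ^ d) atTop atTop :=
    (tendsto_pow_atTop hd0).comp (ht.comp hφtop)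
  have hle : evalP (MvPolynomial.homogeneousComponent d f) v ≤ 0 := by
    have h1 := tendsto_eval_div_pow (fun k => g (φ k)) f
      (fun k => support_subset_Aset _ (hgdeg (φ k))) hsuppf
      (fun α => (hcoefs α).comp hφtop) (t ∘ φ) (ht.comp hφtop) (x ∘ φ) v hφconv'
    have hRs : (1 : ℝ) ≤ ‖xs‖ + 1 := by linarith [norm_nonneg xs]
    have hnum : Tendsto (fun k => evalP (g k) xs) atTop (𝓝 (evalP f xs)) := by
      rw [tendsto_iff_dist_tendsto_zero]
      have hz : Tendsto (fun k : ℕ => (((Aset n d).card : ℝ) * (‖xs‖ + 1) ^ d) * (1 / ((k : ℝ) + 1))) atTop (𝓝 0) := by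
        have h0 := Tendsto.const_mul (((Aset n d).card : ℝ) * (‖xs‖ + 1) ^ d) tendsto_one_div_add_atTop_nhds_zero_nat
        simpa using h0
      refine squeeze_zero (fun k => dist_nonneg) (fun k => ?_) hz
      rw [Real.dist_eq]
      have h : evalP (g k) xs - evalP f xs = evalP (g k - f) xs := by
        simp only [evalP, map_sub]
      rw [h]
      have hsub : (g k - f).support ⊆ Aset n d :=
        subset_trans (MvPolynomial.support_sub _ _ _)
          (Finset.union_subset (support_subset_Aset _ (hgdeg k)) hsuppf)
      refine (abs_evalP_le hsub hRs (by linarith [norm_nonneg xs])).trans ?_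
      exact mul_le_mul_of_nonneg_left (hgl2 k).le (by positivity)
    have hnum2 : Tendsto (fun k => evalP (g (φ k)) xs / t (φ k) ^ d) atTop (𝓝 0) :=
      (hnum.comp hφtop).div_atTop htd
    refine le_of_tendsto_of_tendsto h1 hnum2 ?_
    filter_upwards [htd.eventually_gt_atTop 0] with k hk
    exact div_le_div_of_nonneg_right' (hlt (φ k)).le hk
  have hfd0 : evalP (MvPolynomial.homogeneousComponent d f) v = 0 :=
    le_antisymm hle (hnn v hvK)
  -- scaled points are minimizers
  have hscale : ∀ c : ℝ, 0 < c →
      c • v ∈ solSet (asympCone K) (evalP (MvPolynomial.homogeneousComponent d f)) := by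
    intro c hc
    have hmem : c • v ∈ asympCone K := by
      refine ⟨fun k => t (φ k) / c, x ∘ φ, fun k => hxK _,
        (ht.comp hφtop).atTop_div_const hc, ?_⟩
      have heq : (fun k => (t (φ k) / c)⁻¹ • (x ∘ φ) k)
          = fun k => c • ((t (φ k))⁻¹ • x (φ k)) := by
        funext k
        rw [div_eq_mul_inv, mul_inv, inv_inv, mul_comm, mul_smul]
        rfl
      rw [heq]
      exact hφconv'.const_smul c
    refine ⟨hmem, fun w hw => ?_⟩
    rw [evalP_hc_smul, hfd0, mul_zero]
    exact hnn w hw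
  rw [isBounded_iff_forall_norm_le] at hreg
  obtain ⟨r, hr⟩ := hreg
  obtain ⟨c, hc⟩ := exists_nat_gt r
  have hcpos : (0 : ℝ) < (c : ℝ) + 1 := by positivity
  have := hr _ (hscale ((c : ℝ) + 1) hcpos)
  rw [norm_smul, hv1, mul_one, Real.norm_eq_abs, abs_of_pos hcpos] at this
  linarith

/-- If `K` is a nonempty convex set defined by polynomial equalities and inequalities, `f` has
degree `d ≥ 1`, `Sol(K,f) ≠ ∅`, and `OP(K,f)` is regular, then the optimal value function
`φ(g) = inf_K g` is (finite and) locally Lipschitz continuous at `f`. -/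
theorem stmt14 {n d l m : ℕ} (hd : 1 ≤ d)
    (p : Fin l → MvPolynomial (Fin n) ℝ) (q : Fin m → MvPolynomial (Fin n) ℝ)
    (K : Set (En n))
    (hK : K = {x | (∀ i, evalP (p i) x = 0) ∧ (∀ j, evalP (q j) x ≤ 0)})
    (hKne : K.Nonempty) (hKcv : Convex ℝ K)
    (f : MvPolynomial (Fin n) ℝ) (hdeg : f.totalDegree = d)
    (hSolne : (solSet K (evalP f)).Nonempty)
    (hreg : IsBounded (solSet (asympCone K) (evalP (homogeneousComponent d f)))) :
    ∃ ε > (0 : ℝ), ∃ L > (0 : ℝ),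
      ∀ g : MvPolynomial (Fin n) ℝ, g.totalDegree ≤ d → l2Norm (g - f) < ε →
        BddBelow (evalP g '' K) ∧
        |sInf (evalP g '' K) - sInf (evalP f '' K)| ≤ L * l2Norm (g - f) := by
  obtain ⟨xs, hxsK, hxsmin⟩ := hSolne
  have hKcl : IsClosed K := by
    rw [hK]
    have : {x : En n | (∀ i, evalP (p i) x = 0) ∧ (∀ j, evalP (q j) x ≤ 0)}
        = (⋂ i, {x : En n | evalP (p i) x = 0}) ∩ ⋂ j, {x : En n | evalP (q j) x ≤ 0} := by
      ext x
      simp [Set.mem_iInter]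
    rw [this]
    exact IsClosed.inter
      (isClosed_iInter fun i => isClosed_eq (evalP_continuous _) continuous_const)
      (isClosed_iInter fun j => isClosed_le (evalP_continuous _) continuous_const)
  obtain ⟨R0, ε, hε, hcore⟩ := core_claim hd K f hdeg.le xs hxsK hxsmin hreg
  set R : ℝ := max R0 (‖xs‖ + 1) with hR_def
  have hR1 : (1 : ℝ) ≤ R := le_trans (by linarith [norm_nonneg xs]) (le_max_right _ _)
  have hxsR : ‖xs‖ ≤ R := le_trans (by linarith) (le_max_right _ _)
  set L : ℝ := ((Aset n d).card : ℝ) * R ^ d + 1 with hL_def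
  have hRpos : (0 : ℝ) < R := lt_of_lt_of_le one_pos hR1
  have hLpos : (0 : ℝ) < L := by positivity
  have hbound : ∀ g' : MvPolynomial (Fin n) ℝ, g'.totalDegree ≤ d → ∀ x : En n, ‖x‖ ≤ R →
      |evalP g' x - evalP f x| ≤ L * l2Norm (g' - f) := by
    intro g' hg' x hx
    have h1 : evalP g' x - evalP f x = evalP (g' - f) x := by
      simp only [evalP, map_sub]
    rw [h1]
    have hsub : (g' - f).support ⊆ Aset n d :=
      subset_trans (MvPolynomial.support_sub _ _ _)
        (Finset.union_subset (support_subset_Aset _ hg') (support_subset_Aset _ hdeg.le))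
    refine (abs_evalP_le hsub hR1 hx).trans ?_
    have : ((Aset n d).card : ℝ) * R ^ d ≤ L := by
      rw [hL_def]; linarith
    exact mul_le_mul_of_nonneg_right this (l2Norm_nonneg _)
  refine ⟨ε, hε, L, hLpos, fun g hgdeg hgl2 => ?_⟩
  -- compact piece
  have hKc : IsCompact (K ∩ Metric.closedBall 0 R) :=
    (isCompact_closedBall (0 : En n) R).inter_left hKcl
  have hxsKc : xs ∈ K ∩ Metric.closedBall 0 R :=
    ⟨hxsK, mem_closedBall_zero_iff.mpr hxsR⟩
  obtain ⟨z, hzKc, hzmin'⟩ := hKc.exists_isMinOn ⟨xs, hxsKc⟩ (evalP_continuous g).continuousOn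
  have hzmin : ∀ x ∈ K ∩ Metric.closedBall 0 R, evalP g z ≤ evalP g x := fun x hx => hzmin' hx
  have hzK : z ∈ K := hzKc.1
  have hzR : ‖z‖ ≤ R := mem_closedBall_zero_iff.mp hzKc.2
  have hglob : ∀ x ∈ K, evalP g z ≤ evalP g x := by
    intro x hx
    by_cases hxR : ‖x‖ ≤ R
    · exact hzmin x ⟨hx, mem_closedBall_zero_iff.mpr hxR⟩
    · have hRx : R0 ≤ ‖x‖ := le_trans (le_max_left _ _) (le_of_not_ge hxR)
      exact le_trans (hzmin xs hxsKc) (hcore g hgdeg hgl2 x hx hRx)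
  have hbdd : BddBelow (evalP g '' K) := by
    refine ⟨evalP g z, ?_⟩
    rintro r ⟨x, hx, rfl⟩
    exact hglob x hx
  have hbddf : BddBelow (evalP f '' K) := by
    refine ⟨evalP f xs, ?_⟩
    rintro r ⟨x, hx, rfl⟩
    exact hxsmin x hx
  have hInfg : sInf (evalP g '' K) = evalP g z := by
    refine le_antisymm (csInf_le hbdd ⟨z, hzK, rfl⟩) ?_
    refine le_csInf (hKne.image _) ?_
    rintro r ⟨x, hx, rfl⟩
    exact hglob x hx
  have hInff : sInf (evalP f '' K) = evalP f xs := by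
    refine le_antisymm (csInf_le hbddf ⟨xs, hxsK, rfl⟩) ?_
    refine le_csInf (hKne.image _) ?_
    rintro r ⟨x, hx, rfl⟩
    exact hxsmin x hx
  refine ⟨hbdd, ?_⟩
  rw [hInfg, hInff]
  have hb1 := abs_le.mp (hbound g hgdeg xs hxsR)
  have hb2 := abs_le.mp (hbound g hgdeg z hzR)
  have h3 : evalP g z ≤ evalP g xs := hzmin xs hxsKc
  have h4 : evalP f xs ≤ evalP f z := hxsmin z hzK
  rw [abs_le]
  constructor <;> [linarith [hb2.1]; linarith [hb1.2]]

end
end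

section
/- Fix d ≥ 1 and n ≥ 1. For every nonzero x ∈ ℝ^n, the linear map from the space H_d of homogeneous real polynomials of degree d in n variables to ℝ^n given by h ↦ ∇h(x) (the gradient of h evaluated at x) is surjective; equivalently, writing h = bᵀX_d(x) with coefficient vector b ∈ ℝ^η, the Jacobian matrix D_b[∇(bᵀX_d(x))] has rank n for all x ≠ 0. -/
open Filter Topology MvPolynomial Bornology
open scoped RealInnerProductSpace Pointwise

noncomputable section

/-- For every nonzero `x ∈ ℝ^n`, the linear map `h ↦ ∇h(x)` from the space of homogeneous
polynomials of degree `d` to `ℝ^n` is surjective. -/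
theorem stmt16 {n d : ℕ} (hn : 1 ≤ n) (hd : 1 ≤ d) (x : En n) (hx : x ≠ 0) :
    ∀ v : En n, ∃ h : MvPolynomial (Fin n) ℝ, h.IsHomogeneous d ∧ polyGrad h x = v := by
  intro v
  obtain ⟨j0, hj0⟩ : ∃ j, x j ≠ 0 := by
    by_contra h; push_neg at h; exact hx (PiLp.ext (by simpa using h))
  set S : ℝ := ∑ j, x j ^ 2 with hS
  have hSpos : 0 < S := Finset.sum_pos' (fun _ _ => sq_nonneg _)
    ⟨j0, Finset.mem_univ j0, by positivity⟩
  set P : ℝ := ∑ j, v j * x j with hP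
  set b : ℝ := (S ^ (d - 1))⁻¹ with hb
  set a : ℝ := -((d : ℝ) - 1) * P / ((d : ℝ) * S ^ d) with ha
  set c : Fin n → ℝ := fun j => a * x j + b * v j with hc
  refine ⟨(∑ j, C (c j) * X j) * (∑ j, C (x j) * X j) ^ (d - 1), ?_, ?_⟩
  · have h1 : (∑ j, C (c j) * X j : MvPolynomial (Fin n) ℝ).IsHomogeneous 1 :=
      IsHomogeneous.sum _ _ _ fun j _ => isHomogeneous_C_mul_X _ _
    have h2 : (∑ j, C (x j) * X j : MvPolynomial (Fin n) ℝ).IsHomogeneous 1 :=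
      IsHomogeneous.sum _ _ _ fun j _ => isHomogeneous_C_mul_X _ _
    have := h1.mul (h2.pow (d - 1))
    have hdd : 1 + 1 * (d - 1) = d := by omega
    rwa [hdd] at this
  · ext i
    have hpd : ∀ (q : Fin n → ℝ),
        pderiv i (∑ j, C (q j) * X j : MvPolynomial (Fin n) ℝ) = C (q i) := by
      intro q
      rw [map_sum]
      rw [Finset.sum_eq_single i]
      · simp
      · intro j _ hj; simp [pderiv_C_mul, pderiv_X, Pi.single_apply, hj.symm]
      · simp
    have hev : ∀ (q : Fin n → ℝ),
        eval (fun j => x j) (∑ j, C (q j) * X j : MvPolynomial (Fin n) ℝ)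
          = ∑ j, q j * x j := by
      intro q; simp [map_sum]
    show eval (fun j => x j) (pderiv i _) = v i
    rw [pderiv_mul, Derivation.leibniz_pow]
    simp only [map_add, map_mul, map_smul, hpd, hev, eval_C, map_pow, smul_eq_mul,
      nsmul_eq_mul]
    have hcx : ∑ j, c j * x j = a * S + b * P := by
      simp only [hc, add_mul]
      rw [Finset.sum_add_distrib, hS, hP, Finset.mul_sum, Finset.mul_sum]
      congr 1 <;> exact Finset.sum_congr rfl fun j _ => by ring
    rw [hcx]
    -- now pure real algebra
    have hSne : S ≠ 0 := ne_of_gt hSpos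
    obtain ⟨e, rfl⟩ : ∃ e, d = e + 1 := ⟨d - 1, by omega⟩
    rcases e with _ | f
    · simp [hc, ha, hb]
    · have hxx : (∑ j, x j * x j) = S := by
        rw [hS]; exact Finset.sum_congr rfl fun j _ => (sq (x j)).symm
      rw [hxx]
      simp only [map_natCast, Nat.add_sub_cancel, hc, ha, hb]
      push_cast
      field_simp
      ring


end
end
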